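/- arXiv:1110.0708 — 4 statements merged into one kernel-verified Lean document; each statement's English description precedes it below -/
import Mathlib

section
/- Let q be a prime. For every real s > 1, (Σ_{n ∈ S_{φ;q}} n^{−s}) · (Σ_{n ∈ S'_{q;1}} n^{−s}) = ζ(s) · (1 − q^{−2s}), where ζ is the Riemann zeta function. -/
open Filter Real
open scoped Classical

/-- The Dirichlet series `L_S(s) = ∑_{n ∈ S} n^{-s}` of a set `S` of positive
integers (as a function of a real variable `s`). -/
noncomputable def LSeries' (S : Set ℕ) (s : ℝ) : ℝ :=
  ∑' n : ℕ, if n ∈ S then (n : ℝ) ^ (-s) else 0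

/-- `γS` is the Euler–Kronecker constant of `S` (with density `δ`), i.e.
`L_S'(s)/L_S(s) + δ/(s-1) → γS` as `s → 1⁺`. -/
def IsEulerKronecker (S : Set ℕ) (δ γS : ℝ) : Prop :=
  Tendsto (fun s : ℝ => deriv (LSeries' S) s / LSeries' S s + δ / (s - 1))
    (nhdsWithin 1 (Set.Ioi 1)) (nhds γS)

/-- `S_{φ;q}`: the set of positive integers `n` with `q ∤ φ(n)`. -/
def SPhi (q : ℕ) : Set ℕ := {n : ℕ | 0 < n ∧ ¬ q ∣ Nat.totient n}

/-- `S'_{q;1}`: the set of positive integers all of whose prime factors are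
`≡ 1 (mod q)`. -/
def SOne (q : ℕ) : Set ℕ :=
  {n : ℕ | 0 < n ∧ ∀ p : ℕ, p.Prime → p ∣ n → p % q = 1}

lemma mod_eq_one_iff_dvd {q p : ℕ} (hq : q.Prime) (hp : 1 ≤ p) :
    p % q = 1 ↔ q ∣ p - 1 := by
  rw [← Nat.modEq_iff_dvd' hp, Nat.ModEq, Nat.mod_eq_of_lt hq.one_lt, eq_comm]

lemma dvd_totient_iff {q n : ℕ} (hq : q.Prime) (hn : n ≠ 0) :
    q ∣ n.totient ↔ (∃ p, p.Prime ∧ p ∣ n ∧ p % q = 1) ∨ q ^ 2 ∣ n := by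
  constructor
  · intro h
    rw [Nat.totient_eq_prod_factorization hn, Finsupp.prod] at h
    obtain ⟨p, hp, hpd⟩ := (hq.prime.dvd_finset_prod_iff _).mp h
    rw [Nat.support_factorization] at hp
    have hpp : p.Prime := Nat.prime_of_mem_primeFactors hp
    have hpn : p ∣ n := Nat.dvd_of_mem_primeFactors hp
    rcases hq.prime.dvd_mul.mp hpd with h1 | h2
    · right
      have hqp : q = p := (Nat.prime_dvd_prime_iff_eq hq hpp).mp (hq.dvd_of_dvd_pow h1)
      have hk : 2 ≤ n.factorization p := by
        by_contra hk
        have : n.factorization p - 1 = 0 := by omega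
        rw [this, pow_zero] at h1
        exact hq.one_lt.ne' (Nat.dvd_one.mp h1)
      have : p ^ 2 ∣ n := (pow_dvd_pow p hk).trans (Nat.ordProj_dvd n p)
      rwa [hqp]
    · left
      exact ⟨p, hpp, hpn, (mod_eq_one_iff_dvd hq hpp.one_lt.le).mpr h2⟩
  · rintro (⟨p, hp, hpn, hpq⟩ | h2)
    · have h1 : q ∣ p.totient := by
        rw [Nat.totient_prime hp]
        exact (mod_eq_one_iff_dvd hq hp.one_lt.le).mp hpq
      exact h1.trans (Nat.totient_dvd_of_dvd hpn)
    · have h1 : q ∣ (q ^ 2).totient := by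
        rw [Nat.totient_prime_pow hq (by norm_num)]
        rw [pow_succ, pow_zero, one_mul]; exact Dvd.intro _ rfl
      exact h1.trans (Nat.totient_dvd_of_dvd h2)

lemma mem_SPhi_iff {q n : ℕ} (hq : q.Prime) :
    n ∈ SPhi q ↔ 0 < n ∧ (∀ p, p.Prime → p ∣ n → p % q ≠ 1) ∧ ¬ q ^ 2 ∣ n := by
  constructor
  · rintro ⟨hn, h⟩
    rw [dvd_totient_iff hq hn.ne'] at h
    push_neg at h
    exact ⟨hn, fun p hp hpn => h.1 p hp hpn, h.2⟩
  · rintro ⟨hn, h1, h2⟩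
    refine ⟨hn, ?_⟩
    rw [dvd_totient_iff hq hn.ne']
    push_neg
    exact ⟨fun p hp hpn => h1 p hp hpn, h2⟩

lemma coprime_SPhi_SOne {q a b : ℕ} (hq : q.Prime) (ha : a ∈ SPhi q) (hb : b ∈ SOne q) :
    Nat.Coprime a b := by
  by_contra h
  obtain ⟨p, hp, hpd⟩ := Nat.exists_prime_and_dvd h
  have hpa : p ∣ a := hpd.trans (Nat.gcd_dvd_left a b)
  have hpb : p ∣ b := hpd.trans (Nat.gcd_dvd_right a b)
  exact ((mem_SPhi_iff hq).mp ha).2.1 p hp hpa (hb.2 p hp hpb)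

lemma mul_mem_inj {q : ℕ} (hq : q.Prime) {a₁ b₁ a₂ b₂ : ℕ}
    (ha₁ : a₁ ∈ SPhi q) (hb₁ : b₁ ∈ SOne q) (ha₂ : a₂ ∈ SPhi q) (hb₂ : b₂ ∈ SOne q)
    (h : a₁ * b₁ = a₂ * b₂) : a₁ = a₂ ∧ b₁ = b₂ := by
  have h12 : a₁ ∣ a₂ := (coprime_SPhi_SOne hq ha₁ hb₂).dvd_of_dvd_mul_right ⟨b₁, h.symm⟩
  have h21 : a₂ ∣ a₁ := (coprime_SPhi_SOne hq ha₂ hb₁).dvd_of_dvd_mul_right ⟨b₂, h⟩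
  have ha : a₁ = a₂ := Nat.dvd_antisymm h12 h21
  subst ha
  exact ⟨rfl, Nat.eq_of_mul_eq_mul_left ha₁.1 h⟩

lemma not_sq_dvd_mul {q a b : ℕ} (hq : q.Prime) (ha : a ∈ SPhi q) (hb : b ∈ SOne q) :
    ¬ q ^ 2 ∣ a * b := by
  intro h
  have hqb : ¬ q ∣ b := fun hd => by
    have := hb.2 q hq hd
    simp [Nat.mod_self] at this
  have hcop : Nat.Coprime (q ^ 2) b := (Nat.Prime.coprime_iff_not_dvd hq |>.mpr hqb).pow_left _
  exact ((mem_SPhi_iff hq).mp ha).2.2 (hcop.dvd_of_dvd_mul_right h)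

lemma exists_split {q n : ℕ} (hq : q.Prime) (hn : 0 < n) (hn2 : ¬ q ^ 2 ∣ n) :
    ∃ a b, a ∈ SPhi q ∧ b ∈ SOne q ∧ a * b = n := by
  set b := n.factorization.prod fun p k => if p % q = 1 then p ^ k else 1 with hbdef
  set a := n.factorization.prod fun p k => if p % q = 1 then 1 else p ^ k with hadef
  have hab : a * b = n := by
    rw [hadef, hbdef, ← Finsupp.prod_mul]
    have heq : (n.factorization.prod fun p k =>
        (if p % q = 1 then 1 else p ^ k) * (if p % q = 1 then p ^ k else 1))
        = n.factorization.prod (· ^ ·) := by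
      apply Finsupp.prod_congr
      intro p _
      split <;> simp
    rw [heq, Nat.factorization_prod_pow_eq_self hn.ne']
  have hbprime : ∀ r : ℕ, r.Prime → r ∣ b → r % q = 1 := by
    intro r hr hrb
    rw [hbdef, Finsupp.prod] at hrb
    obtain ⟨p, hp, hpd⟩ := (hr.prime.dvd_finset_prod_iff _).mp hrb
    rw [Nat.support_factorization] at hp
    have hpp := Nat.prime_of_mem_primeFactors hp
    by_cases hc : p % q = 1
    · rw [if_pos hc] at hpd
      rwa [(Nat.prime_dvd_prime_iff_eq hr hpp).mp (hr.dvd_of_dvd_pow hpd)]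
    · rw [if_neg hc] at hpd
      exact absurd (Nat.dvd_one.mp hpd) hr.one_lt.ne'
  have haprime : ∀ r : ℕ, r.Prime → r ∣ a → r % q ≠ 1 := by
    intro r hr hra
    rw [hadef, Finsupp.prod] at hra
    obtain ⟨p, hp, hpd⟩ := (hr.prime.dvd_finset_prod_iff _).mp hra
    rw [Nat.support_factorization] at hp
    have hpp := Nat.prime_of_mem_primeFactors hp
    by_cases hc : p % q = 1
    · rw [if_pos hc] at hpd
      exact absurd (Nat.dvd_one.mp hpd) hr.one_lt.ne'
    · rw [if_neg hc] at hpd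
      rwa [(Nat.prime_dvd_prime_iff_eq hr hpp).mp (hr.dvd_of_dvd_pow hpd)]
  have hapos : 0 < a := Nat.pos_of_dvd_of_pos ⟨b, hab.symm⟩ hn
  have hbpos : 0 < b := Nat.pos_of_dvd_of_pos ⟨a, by rw [mul_comm]; exact hab.symm⟩ hn
  refine ⟨a, b, (mem_SPhi_iff hq).mpr ⟨hapos, haprime, fun hd => hn2 (hd.trans ⟨b, hab.symm⟩)⟩,
    ⟨hbpos, hbprime⟩, hab⟩

/-- For a prime `q` and real `s > 1`,
`L_{S_{φ;q}}(s) · L_{S'_{q;1}}(s) = ζ(s) (1 - q^{-2s})`. -/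
theorem LSeries_SPhi_mul_LSeries_SOne (q : ℕ) (hq : q.Prime) (s : ℝ) (hs : 1 < s) :
    LSeries' (SPhi q) s * LSeries' (SOne q) s =
      (∑' n : ℕ, (n : ℝ) ^ (-s)) * (1 - (q : ℝ) ^ (-(2 * s))) := by
  simp only [LSeries']
  have hsum : Summable (fun n : ℕ => (n : ℝ) ^ (-s)) :=
    Real.summable_nat_rpow.mpr (by linarith)
  have hnorm : ∀ S : Set ℕ, Summable fun n => ‖if n ∈ S then (n : ℝ) ^ (-s) else 0‖ := by
    intro S
    refine Summable.of_nonneg_of_le (fun n => norm_nonneg _) (fun n => ?_) hsum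
    rw [Real.norm_eq_abs]
    split
    · rw [abs_of_nonneg (Real.rpow_nonneg (Nat.cast_nonneg n) _)]
    · simpa using Real.rpow_nonneg (Nat.cast_nonneg n) (-s)
  rw [tsum_mul_tsum_of_summable_norm (hnorm _) (hnorm _)]
  set h : ℕ → ℝ := fun n => if 0 < n ∧ ¬ q ^ 2 ∣ n then (n : ℝ) ^ (-s) else 0 with hhdef
  set k : ℕ → ℝ := fun n => if q ^ 2 ∣ n then (n : ℝ) ^ (-s) else 0 with hkdef
  have hGsupp : ∀ z : ℕ × ℕ,
      ((if z.1 ∈ SPhi q then (z.1 : ℝ) ^ (-s) else 0) *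
        (if z.2 ∈ SOne q then (z.2 : ℝ) ^ (-s) else 0)) ≠ 0 →
      z.1 ∈ SPhi q ∧ z.2 ∈ SOne q := by
    intro z hz
    by_contra hc
    rw [not_and_or] at hc
    rcases hc with hc | hc
    · rw [if_neg hc, zero_mul] at hz; exact hz rfl
    · rw [if_neg hc, mul_zero] at hz; exact hz rfl
  have key : (∑' n, h n) = ∑' z : ℕ × ℕ,
      (if z.1 ∈ SPhi q then (z.1 : ℝ) ^ (-s) else 0) *
        (if z.2 ∈ SOne q then (z.2 : ℝ) ^ (-s) else 0) := by
    apply tsum_eq_tsum_of_ne_zero_bij (fun z => z.1.1 * z.1.2)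
    · rintro ⟨z, hz⟩ ⟨w, hw⟩ hzw
      obtain ⟨hz1, hz2⟩ := hGsupp z hz
      obtain ⟨hw1, hw2⟩ := hGsupp w hw
      obtain ⟨h1, h2⟩ := mul_mem_inj hq hz1 hz2 hw1 hw2 hzw
      exact Subtype.ext (Prod.ext h1 h2)
    · intro n hn
      have hcond : 0 < n ∧ ¬ q ^ 2 ∣ n := by
        by_contra hc
        exact hn (if_neg hc)
      obtain ⟨a, b, ha, hb, hab⟩ := exists_split hq hcond.1 hcond.2
      have hfa : (if a ∈ SPhi q then (a : ℝ) ^ (-s) else 0) = (a : ℝ) ^ (-s) := if_pos ha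
      have hgb : (if b ∈ SOne q then (b : ℝ) ^ (-s) else 0) = (b : ℝ) ^ (-s) := if_pos hb
      refine ⟨⟨(a, b), ?_⟩, hab⟩
      rw [Function.mem_support, hfa, hgb]
      exact mul_ne_zero (Real.rpow_pos_of_pos (by exact_mod_cast ha.1) _).ne'
        (Real.rpow_pos_of_pos (by exact_mod_cast hb.1) _).ne'
    · rintro ⟨z, hz⟩
      obtain ⟨hz1, hz2⟩ := hGsupp z hz
      have hcond : 0 < z.1 * z.2 ∧ ¬ q ^ 2 ∣ z.1 * z.2 :=
        ⟨Nat.mul_pos hz1.1 hz2.1, not_sq_dvd_mul hq hz1 hz2⟩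
      show h (z.1 * z.2) = _
      rw [hhdef]
      simp only
      rw [if_pos hcond, if_pos hz1, if_pos hz2]
      push_cast
      rw [Real.mul_rpow (Nat.cast_nonneg _) (Nat.cast_nonneg _)]
  rw [← key]
  have hksummable : Summable k := by
    refine Summable.of_nonneg_of_le (fun n => ?_) (fun n => ?_) hsum
    · rw [hkdef]; dsimp only; split
      · exact Real.rpow_nonneg (Nat.cast_nonneg n) _
      · exact le_refl 0
    · rw [hkdef]; dsimp only; split
      · exact le_refl _
      · exact Real.rpow_nonneg (Nat.cast_nonneg n) _
  have hhk : ∀ n : ℕ, h n = (n : ℝ) ^ (-s) - k n := by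
    intro n
    rw [hhdef, hkdef]
    simp only
    by_cases hd : q ^ 2 ∣ n
    · rw [if_pos hd, if_neg (by tauto)]
      ring
    · have hn0 : n ≠ 0 := by rintro rfl; exact hd (dvd_zero _)
      rw [if_neg hd, if_pos ⟨Nat.pos_of_ne_zero hn0, hd⟩]
      ring
  have hksum_eq : (∑' n, k n) = (q : ℝ) ^ (-(2 * s)) * ∑' n : ℕ, (n : ℝ) ^ (-s) := by
    have hinj : Function.Injective (fun m : ℕ => q ^ 2 * m) := fun x y hxy => by
      have hq2 : 0 < q ^ 2 := pow_pos hq.pos 2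
      exact Nat.eq_of_mul_eq_mul_left hq2 hxy
    have hsupp : Function.support k ⊆ Set.range (fun m : ℕ => q ^ 2 * m) := by
      intro n hn
      have hd : q ^ 2 ∣ n := by
        by_contra hc
        exact hn (if_neg hc)
      obtain ⟨m, hm⟩ := hd
      exact ⟨m, hm.symm⟩
    rw [← hinj.tsum_eq hsupp]
    have hterm : ∀ m : ℕ, k (q ^ 2 * m) = (q : ℝ) ^ (-(2 * s)) * (m : ℝ) ^ (-s) := by
      intro m
      rw [hkdef]
      simp only
      rw [if_pos (dvd_mul_right _ _)]
      push_cast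
      rw [Real.mul_rpow (by positivity) (Nat.cast_nonneg m)]
      congr 1
      rw [← Real.rpow_natCast (q : ℝ) 2, ← Real.rpow_mul (Nat.cast_nonneg q)]
      norm_num
    simp only [hterm]
    rw [tsum_mul_left]
  have hsub : (∑' n, h n) = (∑' n : ℕ, (n : ℝ) ^ (-s)) - ∑' n, k n := by
    simp_rw [hhk]
    exact Summable.tsum_sub hsum hksummable
  rw [hsub, hksum_eq]
  ring
end

section
/- Let q be a prime. Then γ_{S'_{q;1}} = γ − γ_{S_{φ;q}} + 2·log q/(q² − 1), where γ is the Euler–Mascheroni constant, γ_{S_{φ;q}} is the Euler–Kronecker constant of S_{φ;q} = {n ≥ 1 : q ∤ φ(n)} taken with density δ = (q−2)/(q−1), and γ_{S'_{q;1}} is the Euler–Kronecker constant of S'_{q;1} taken with density δ = 1/(q−1). -/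
open Filter Real
open scoped Classical

namespace EKaux

lemma summable_rpow_neg {s : ℝ} (hs : 1 < s) : Summable (fun n : ℕ => (n : ℝ) ^ (-s)) :=
  Real.summable_nat_rpow.mpr (by linarith)

lemma summable_ind (S : Set ℕ) {s : ℝ} (hs : 1 < s) :
    Summable (fun n : ℕ => if n ∈ S then (n : ℝ) ^ (-s) else 0) := by
  refine (summable_rpow_neg hs).of_nonneg_of_le (fun n => ?_) (fun n => ?_)
  · split <;> positivity
  · split
    · exact le_rfl
    · positivity

lemma ind_nonneg (S : Set ℕ) (s : ℝ) (n : ℕ) :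
    0 ≤ if n ∈ S then (n : ℝ) ^ (-s) else 0 := by split <;> positivity

lemma one_le_LSeries' {S : Set ℕ} (h1 : 1 ∈ S) {s : ℝ} (hs : 1 < s) :
    1 ≤ LSeries' S s := by
  have := Summable.le_tsum (summable_ind S hs) 1 (fun n _ => ind_nonneg S s n)
  simpa [h1, LSeries'] using this

lemma LSeries'_pos {S : Set ℕ} (h1 : 1 ∈ S) {s : ℝ} (hs : 1 < s) :
    0 < LSeries' S s := lt_of_lt_of_le one_pos (one_le_LSeries' h1 hs)

/-- summable bound for derivatives -/
lemma summable_log_mul {s₀ : ℝ} (hs₀ : 1 < s₀) :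
    Summable (fun n : ℕ => Real.log n * (n : ℝ) ^ (-s₀)) := by
  set ε := (s₀ - 1) / 2 with hε
  have hε0 : 0 < ε := by rw [hε]; linarith
  have hsum : Summable (fun n : ℕ => ε⁻¹ * (n : ℝ) ^ (ε - s₀)) :=
    (Real.summable_nat_rpow.mpr (by rw [hε]; linarith)).mul_left _
  refine hsum.of_nonneg_of_le (fun n => ?_) (fun n => ?_)
  · rcases Nat.eq_zero_or_pos n with h | h
    · simp [h]
    · have : (1:ℝ) ≤ n := by exact_mod_cast h
      positivity
  · rcases Nat.eq_zero_or_pos n with h | h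
    · simp [h]
      positivity
    · have hn1 : (1:ℝ) ≤ (n:ℝ) := by exact_mod_cast h
      have hlog : Real.log n ≤ (n:ℝ) ^ ε / ε := Real.log_le_rpow_div (by positivity) hε0
      have hpow : (0:ℝ) < (n:ℝ) ^ (-s₀) := by positivity
      calc Real.log n * (n:ℝ) ^ (-s₀) ≤ ((n:ℝ) ^ ε / ε) * (n:ℝ) ^ (-s₀) := by
            exact mul_le_mul_of_nonneg_right hlog hpow.le
        _ = ε⁻¹ * (n : ℝ) ^ (ε - s₀) := by
            rw [sub_eq_add_neg, Real.rpow_add (by positivity : (0:ℝ) < n)]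
            ring

lemma hasDerivAt_LSeries' (S : Set ℕ) (hS : 0 ∉ S) {s : ℝ} (hs : 1 < s) :
    HasDerivAt (LSeries' S)
      (∑' n : ℕ, if n ∈ S then -(Real.log n * (n : ℝ) ^ (-s)) else 0) s := by
  set s₀ := (1 + s) / 2 with hs₀def
  have hs₀ : 1 < s₀ := by rw [hs₀def]; linarith
  have hss : s ∈ Set.Ioi s₀ := by simp only [Set.mem_Ioi, hs₀def]; linarith
  have key : HasDerivAt (fun z : ℝ => ∑' n : ℕ, if n ∈ S then (n : ℝ) ^ (-z) else 0)
      (∑' n : ℕ, if n ∈ S then -(Real.log n * (n : ℝ) ^ (-s)) else 0) s := by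
    refine hasDerivAt_tsum_of_isPreconnected
      (g := fun (n : ℕ) (y : ℝ) => if n ∈ S then (n : ℝ) ^ (-y) else 0)
      (g' := fun (n : ℕ) (y : ℝ) => if n ∈ S then -(Real.log n * (n : ℝ) ^ (-y)) else 0)
      (summable_log_mul hs₀) isOpen_Ioi isPreconnected_Ioi
      (fun n y hy => ?_) (fun n y hy => ?_) hss (summable_ind S hs) hss
    · by_cases hn : n ∈ S
      · have hn0 : 0 < n := Nat.pos_of_ne_zero (by rintro rfl; exact hS hn)
        have hn0' : (0:ℝ) < n := by exact_mod_cast hn0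
        have h1 : HasDerivAt (fun y : ℝ => (n : ℝ) ^ (-y))
            (((n:ℝ) ^ (-y) * Real.log n) * (-1)) y := by
          have hbase : HasDerivAt (fun z : ℝ => (n : ℝ) ^ z)
              ((n:ℝ) ^ (-y) * Real.log n) (-y) :=
            (Real.hasStrictDerivAt_const_rpow hn0' (-y)).hasDerivAt
          exact hbase.comp y (hasDerivAt_neg y)
        have h2 : ((n:ℝ) ^ (-y) * Real.log n) * (-1) = -(Real.log n * (n:ℝ) ^ (-y)) := by ring
        rw [h2] at h1
        simpa only [hn, if_true] using h1
      · simpa only [hn, if_false] using hasDerivAt_const y (0:ℝ)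
    · by_cases hn : n ∈ S
      · have hn0 : 0 < n := Nat.pos_of_ne_zero (by rintro rfl; exact hS hn)
        have hn1 : (1:ℝ) ≤ (n:ℝ) := by exact_mod_cast hn0
        have hlog : 0 ≤ Real.log n := Real.log_nonneg hn1
        have hy' : s₀ < y := hy
        have hmono : (n:ℝ) ^ (-y) ≤ (n:ℝ) ^ (-s₀) :=
          Real.rpow_le_rpow_of_exponent_le hn1 (by linarith)
        have habs : |Real.log n * (n:ℝ) ^ (-y)| = Real.log n * (n:ℝ) ^ (-y) := by
          rw [abs_of_nonneg]; positivity
        simp only [hn, if_true, norm_neg, Real.norm_eq_abs, habs]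
        exact mul_le_mul_of_nonneg_left hmono hlog
      · simp only [hn, if_false, norm_zero]
        positivity
  exact key

lemma mod_eq_one_iff {q p : ℕ} (hq : 1 < q) (hp : 0 < p) : p % q = 1 ↔ q ∣ p - 1 := by
  rw [← Nat.modEq_iff_dvd' hp]
  unfold Nat.ModEq
  rw [Nat.mod_eq_of_lt hq]
  exact comm

lemma dvd_totient_iff {q : ℕ} (hq : q.Prime) {n : ℕ} (hn : 0 < n) :
    q ∣ Nat.totient n ↔ q ^ 2 ∣ n ∨ ∃ p, p.Prime ∧ p ∣ n ∧ p % q = 1 := by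
  constructor
  · intro h
    rw [Nat.totient_eq_prod_factorization hn.ne'] at h
    rw [Finsupp.prod] at h
    obtain ⟨p, hp, hpd⟩ := (hq.prime.dvd_finset_prod_iff _).mp h
    have hpmem : p ∈ n.primeFactors := by
      rwa [Nat.support_factorization] at hp
    have hpp : p.Prime := Nat.prime_of_mem_primeFactors hpmem
    have hpdn : p ∣ n := Nat.dvd_of_mem_primeFactors hpmem
    rcases hq.prime.dvd_mul.mp hpd with h1 | h2
    · left
      have hqp : q = p := by
        have := hq.dvd_of_dvd_pow h1
        exact (Nat.prime_dvd_prime_iff_eq hq hpp).mp this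
      have hk2 : 2 ≤ n.factorization p := by
        by_contra hlt
        push_neg at hlt
        interval_cases h : n.factorization p <;> simp_all [Nat.dvd_one, hq.ne_one]
      subst hqp
      calc q ^ 2 ∣ q ^ n.factorization q := pow_dvd_pow q hk2
        _ ∣ n := Nat.ordProj_dvd n q
    · right
      exact ⟨p, hpp, hpdn, (mod_eq_one_iff hq.one_lt hpp.pos).mpr h2⟩
  · rintro (h | ⟨p, hpp, hpn, hpq⟩)
    · have h1 : q ∣ Nat.totient (q ^ 2) := by
        rw [Nat.totient_prime_pow hq (by norm_num)]
        simp
      exact h1.trans (Nat.totient_dvd_of_dvd h)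
    · have h1 : q ∣ Nat.totient p := by
        rw [Nat.totient_prime hpp]
        exact (mod_eq_one_iff hq.one_lt hpp.pos).mp hpq
      exact h1.trans (Nat.totient_dvd_of_dvd hpn)

lemma SPhi_iff {q : ℕ} (hq : q.Prime) {n : ℕ} :
    n ∈ SPhi q ↔ 0 < n ∧ ¬ q ^ 2 ∣ n ∧ ∀ p, p.Prime → p ∣ n → p % q ≠ 1 := by
  constructor
  · rintro ⟨hn, hd⟩
    rw [dvd_totient_iff hq hn] at hd
    push_neg at hd
    exact ⟨hn, hd.1, fun p hp hpn => hd.2 p hp hpn⟩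
  · rintro ⟨hn, h2, h3⟩
    refine ⟨hn, ?_⟩
    rw [dvd_totient_iff hq hn]
    push_neg
    exact ⟨h2, fun p hp hpn => h3 p hp hpn⟩

lemma exists_decomp {q : ℕ} (hq : q.Prime) {n : ℕ} (hn : 0 < n) (hn2 : ¬ q ^ 2 ∣ n) :
    ∃ a b : ℕ, a ∈ SPhi q ∧ b ∈ SOne q ∧ a * b = n := by
  classical
  set f := n.factorization.filter (fun p => p % q = 1) with hf
  set b := f.prod (· ^ ·) with hb
  have hsupp : f.support ⊆ n.factorization.support := by
    intro p hp
    rw [hf, Finsupp.support_filter, Finset.mem_filter] at hp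
    exact hp.1
  have hbpos : 0 < b := by
    rw [hb]
    apply Finset.prod_pos
    intro p hp
    have : p.Prime := Nat.prime_of_mem_primeFactors (by
      rw [← Nat.support_factorization]; exact hsupp hp)
    exact pow_pos this.pos _
  have hbfact : b.factorization = f := by
    rw [hb]
    apply Nat.prod_pow_factorization_eq_self
    intro p hp
    exact Nat.prime_of_mem_primeFactors (by
      rw [← Nat.support_factorization]; exact hsupp hp)
  have hbdvd : b ∣ n := by
    rw [← Nat.factorization_le_iff_dvd hbpos.ne' hn.ne', hbfact]
    intro p
    simp only [hf, Finsupp.filter_apply]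
    split <;> simp
  have hbone : b ∈ SOne q := by
    refine ⟨hbpos, fun p hp hpb => ?_⟩
    have hpmem : p ∈ b.factorization.support := by
      rw [Nat.support_factorization]
      exact (Nat.mem_primeFactors_of_ne_zero hbpos.ne').mpr ⟨hp, hpb⟩
    rw [hbfact] at hpmem
    rw [Finsupp.support_filter, Finset.mem_filter] at hpmem
    exact hpmem.2
  set a := n / b with ha
  have hab : a * b = n := Nat.div_mul_cancel hbdvd
  have hapos : 0 < a := by
    rcases Nat.eq_zero_or_pos a with h | h
    · exfalso; rw [h, zero_mul] at hab; omega
    · exact h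
  have hafact : ∀ p, a.factorization p = n.factorization p - f p := by
    intro p
    rw [ha, Nat.factorization_div hbdvd, hbfact]
    rfl
  refine ⟨a, b, ?_, hbone, hab⟩
  rw [SPhi_iff hq]
  have hadvd : a ∣ n := ⟨b, hab.symm⟩
  refine ⟨hapos, fun hdvd => hn2 (hdvd.trans hadvd), ?_⟩
  · intro p hp hpa hpq
    have hpn : p ∣ n := hpa.trans hadvd
    have h1 : 1 ≤ a.factorization p := by
      rw [Nat.one_le_iff_ne_zero, ← Finsupp.mem_support_iff, Nat.support_factorization]
      exact (Nat.mem_primeFactors_of_ne_zero hapos.ne').mpr ⟨hp, hpa⟩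
    have h2 : f p = n.factorization p := by
      simp only [hf, Finsupp.filter_apply, hpq, if_true]
    rw [hafact p, h2] at h1
    omega

lemma decomp_unique {q : ℕ} (hq : q.Prime) {a b a' b' : ℕ}
    (ha : a ∈ SPhi q) (hb : b ∈ SOne q) (ha' : a' ∈ SPhi q) (hb' : b' ∈ SOne q)
    (h : a * b = a' * b') : a = a' ∧ b = b' := by
  have key : ∀ x y x' y' : ℕ, x ∈ SPhi q → y ∈ SOne q → x' ∈ SPhi q → y' ∈ SOne q →
      x * y = x' * y' → y' ∣ y := by
    intro x y x' y' hx hy hx' hy' hxy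
    have hcop : Nat.Coprime x y' := by
      rw [Nat.coprime_comm]
      by_contra hnc
      obtain ⟨p, hp, hpy', hpx⟩ := (Nat.Prime.not_coprime_iff_dvd).mp hnc
      have h1 : p % q = 1 := hy'.2 p hp hpy'
      exact ((SPhi_iff hq).mp hx).2.2 p hp hpx h1
    have hdvd : y' ∣ x * y := by rw [hxy]; exact Dvd.intro_left _ rfl
    exact (Nat.Coprime.dvd_of_dvd_mul_left hcop.symm hdvd)
  have h1 : b' ∣ b := key a b a' b' ha hb ha' hb' h
  have h2 : b ∣ b' := key a' b' a b ha' hb' ha hb h.symm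
  have hbb : b = b' := Nat.dvd_antisymm h2 h1
  subst hbb
  have hbpos : 0 < b := hb.1
  exact ⟨Nat.eq_of_mul_eq_mul_right hbpos h, rfl⟩

lemma mul_mem_T2 {q : ℕ} (hq : q.Prime) {a b : ℕ} (ha : a ∈ SPhi q) (hb : b ∈ SOne q) :
    0 < a * b ∧ ¬ q ^ 2 ∣ a * b := by
  have hap := ha.1
  have hbp := hb.1
  refine ⟨Nat.mul_pos hap hbp, fun hdvd => ?_⟩
  have hqb : ¬ q ∣ b := by
    intro hd
    have h1 := hb.2 q hq hd
    rw [Nat.mod_self] at h1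
    exact one_ne_zero h1.symm
  have hcop : Nat.Coprime (q ^ 2) b :=
    Nat.Coprime.pow_left 2 ((Nat.Prime.coprime_iff_not_dvd hq).mpr hqb)
  have : q ^ 2 ∣ a := (Nat.Coprime.dvd_of_dvd_mul_right hcop hdvd)
  exact ((SPhi_iff hq).mp ha).2.1 this

def Zset : Set ℕ := {n : ℕ | 0 < n}

lemma zero_not_mem_Zset : (0:ℕ) ∉ Zset := by simp [Zset]
lemma one_mem_Zset : (1:ℕ) ∈ Zset := by simp [Zset]

/-- the set of `n ≥ 1` not divisible by `q^2` -/
def T2 (q : ℕ) : Set ℕ := {n : ℕ | 0 < n ∧ ¬ q ^ 2 ∣ n}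

/-- the summand of `LSeries'` -/
noncomputable def F (S : Set ℕ) (s : ℝ) (n : ℕ) : ℝ := if n ∈ S then (n : ℝ) ^ (-s) else 0

lemma LSeries'_eq (S : Set ℕ) (s : ℝ) : LSeries' S s = ∑' n, F S s n := rfl

lemma summable_F (S : Set ℕ) {s : ℝ} (hs : 1 < s) : Summable (F S s) :=
  summable_ind S hs

lemma F_nonneg (S : Set ℕ) (s : ℝ) (n : ℕ) : 0 ≤ F S s n := by
  unfold F; split <;> positivity

lemma F_of_mem {S : Set ℕ} {n : ℕ} (h : n ∈ S) (s : ℝ) : F S s n = (n : ℝ) ^ (-s) :=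
  if_pos h

lemma F_of_not_mem {S : Set ℕ} {n : ℕ} (h : n ∉ S) (s : ℝ) : F S s n = 0 :=
  if_neg h

lemma mem_of_F_ne_zero {S : Set ℕ} {n : ℕ} {s : ℝ} (h : F S s n ≠ 0) : n ∈ S := by
  by_contra hc
  exact h (F_of_not_mem hc s)

lemma LSeries'_mul_eq {q : ℕ} (hq : q.Prime) {s : ℝ} (hs : 1 < s) :
    LSeries' (SPhi q) s * LSeries' (SOne q) s = LSeries' (T2 q) s := by
  classical
  have hf : Summable (F (SPhi q) s) := summable_F _ hs
  have hg : Summable (F (SOne q) s) := summable_F _ hs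
  have hfg : Summable (fun x : ℕ × ℕ => F (SPhi q) s x.1 * F (SOne q) s x.2) :=
    hf.mul_of_nonneg hg (F_nonneg _ _) (F_nonneg _ _)
  rw [LSeries'_eq, LSeries'_eq, LSeries'_eq, Summable.tsum_mul_tsum hf hg hfg]
  have hmem : ∀ x : ℕ × ℕ, (F (SPhi q) s x.1 * F (SOne q) s x.2 ≠ 0) →
      x.1 ∈ SPhi q ∧ x.2 ∈ SOne q := by
    intro x hx
    constructor
    · exact mem_of_F_ne_zero (left_ne_zero_of_mul hx)
    · exact mem_of_F_ne_zero (right_ne_zero_of_mul hx)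
  symm
  refine tsum_eq_tsum_of_ne_zero_bij (f := F (T2 q) s)
    (g := fun x : ℕ × ℕ => F (SPhi q) s x.1 * F (SOne q) s x.2)
    (fun x => x.1.1 * x.1.2) ?_ ?_ ?_
  · rintro ⟨x, hx⟩ ⟨y, hy⟩ hxy
    simp only at hxy
    have hx' := hmem x hx
    have hy' := hmem y hy
    obtain ⟨h1, h2⟩ := decomp_unique hq hx'.1 hx'.2 hy'.1 hy'.2 hxy
    exact Subtype.ext (Prod.ext h1 h2)
  · intro n hn
    have hnT : n ∈ T2 q := mem_of_F_ne_zero hn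
    obtain ⟨a, b, ha, hb, hab⟩ := exists_decomp hq hnT.1 hnT.2
    have hgt : F (SPhi q) s a * F (SOne q) s b ≠ 0 := by
      rw [F_of_mem ha, F_of_mem hb]
      have h1 : (0:ℝ) < (a:ℝ) ^ (-s) := Real.rpow_pos_of_pos (by exact_mod_cast ha.1) _
      have h2 : (0:ℝ) < (b:ℝ) ^ (-s) := Real.rpow_pos_of_pos (by exact_mod_cast hb.1) _
      positivity
    exact ⟨⟨(a, b), hgt⟩, hab⟩
  · rintro ⟨x, hx⟩
    obtain ⟨hx1, hx2⟩ := hmem x hx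
    have hT : x.1 * x.2 ∈ T2 q := by
      have := mul_mem_T2 hq hx1 hx2
      exact ⟨this.1, this.2⟩
    simp only [F_of_mem hx1, F_of_mem hx2, F_of_mem hT]
    rw [Nat.cast_mul, Real.mul_rpow (by positivity) (by positivity)]

lemma mem_Zset_iff {n : ℕ} : n ∈ Zset ↔ 0 < n := Iff.rfl

lemma LSeries'_T2_eq {q : ℕ} (hq : q.Prime) {s : ℝ} (hs : 1 < s) :
    LSeries' (T2 q) s = LSeries' Zset s * (1 - (q : ℝ) ^ (-(2 * s))) := by
  classical
  set c : ℝ := (q : ℝ) ^ (-(2 * s)) with hc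
  set Dset : Set ℕ := {n : ℕ | 0 < n ∧ q ^ 2 ∣ n} with hDset
  have hsplit : ∀ n : ℕ, F Zset s n = F (T2 q) s n + F Dset s n := by
    intro n
    by_cases h0 : 0 < n
    · by_cases hd : q ^ 2 ∣ n
      · rw [F_of_mem (mem_Zset_iff.mpr h0),
          F_of_not_mem (show n ∉ T2 q from fun h => h.2 hd),
          F_of_mem (show n ∈ Dset from ⟨h0, hd⟩)]
        ring
      · rw [F_of_mem (mem_Zset_iff.mpr h0),
          F_of_mem (show n ∈ T2 q from ⟨h0, hd⟩),
          F_of_not_mem (show n ∉ Dset from fun h => hd h.2)]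
        ring
    · rw [F_of_not_mem (fun h => h0 (mem_Zset_iff.mp h)),
        F_of_not_mem (show n ∉ T2 q from fun h => h0 h.1),
        F_of_not_mem (show n ∉ Dset from fun h => h0 h.1)]
      ring
  have hZ : LSeries' Zset s = LSeries' (T2 q) s + (∑' n, F Dset s n) := by
    rw [LSeries'_eq, LSeries'_eq]
    rw [← Summable.tsum_add (summable_F (T2 q) hs) (summable_F Dset hs)]
    exact tsum_congr hsplit
  have hD : (∑' n, F Dset s n) = c * LSeries' Zset s := by
    rw [LSeries'_eq]
    have hqq : (0:ℕ) < q ^ 2 := pow_pos hq.pos 2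
    have hinj : Function.Injective (fun m : ℕ => q ^ 2 * m) :=
      fun a b h => Nat.eq_of_mul_eq_mul_left hqq h
    have hsupp : Function.support (F Dset s) ⊆ Set.range (fun m : ℕ => q ^ 2 * m) := by
      intro n hn
      have hnD : n ∈ Dset := mem_of_F_ne_zero hn
      obtain ⟨m, hm⟩ := hnD.2
      exact ⟨m, hm.symm⟩
    have hterm : ∀ m : ℕ, F Dset s (q ^ 2 * m) = c * F Zset s m := by
      intro m
      by_cases hm : 0 < m
      · have hmem : q ^ 2 * m ∈ Dset := ⟨Nat.mul_pos hqq hm, Dvd.intro m rfl⟩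
        have hq0 : (0:ℝ) ≤ (q:ℝ) := by positivity
        rw [F_of_mem hmem, F_of_mem (mem_Zset_iff.mpr hm)]
        rw [Nat.cast_mul, Nat.cast_pow,
          Real.mul_rpow (by positivity) (by positivity)]
        congr 1
        rw [hc, ← Real.rpow_natCast (q:ℝ) 2, ← Real.rpow_mul hq0]
        congr 1
        push_cast
        ring
      · have hm0 : m = 0 := by omega
        subst hm0
        rw [mul_zero, F_of_not_mem (show (0:ℕ) ∉ Dset from fun h => lt_irrefl 0 h.1),
          F_of_not_mem (fun h => lt_irrefl 0 (mem_Zset_iff.mp h))]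
        ring
    calc (∑' n : ℕ, F Dset s n)
        = ∑' m : ℕ, F Dset s (q ^ 2 * m) := (hinj.tsum_eq hsupp).symm
      _ = ∑' m : ℕ, c * F Zset s m := tsum_congr hterm
      _ = c * ∑' m : ℕ, F Zset s m := tsum_mul_left
  rw [hD] at hZ
  linarith [hZ]


lemma ofReal_Z {s : ℝ} (hs : 1 < s) :
    ((LSeries' Zset s : ℝ) : ℂ) = riemannZeta s := by
  rw [zeta_eq_tsum_one_div_nat_cpow (by simp [hs] : 1 < (s:ℂ).re)]
  unfold LSeries'
  rw [Complex.ofReal_tsum]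
  refine tsum_congr fun n => ?_
  rcases Nat.eq_zero_or_pos n with h | h
  · have hs0 : (s:ℂ) ≠ 0 := by
      simp only [ne_eq, Complex.ofReal_eq_zero]
      linarith
    simp [h, zero_not_mem_Zset, Complex.zero_cpow hs0]
  · have hmem : n ∈ Zset := h
    have hn0 : (0:ℝ) ≤ (n:ℝ) := by positivity
    simp only [hmem, if_true]
    rw [show ((n:ℝ) ^ (-s) : ℝ) = ((n:ℝ) ^ (-s) : ℝ) from rfl]
    rw [Complex.ofReal_cpow hn0]
    push_cast
    rw [Complex.cpow_neg]
    rw [one_div]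

lemma ofReal_deriv_Z {s : ℝ} (hs : 1 < s) :
    ((deriv (LSeries' Zset) s : ℝ) : ℂ) = deriv riemannZeta s := by
  have hZ := hasDerivAt_LSeries' Zset zero_not_mem_Zset hs
  have hd : deriv (LSeries' Zset) s
      = ∑' n : ℕ, if n ∈ Zset then -(Real.log n * (n : ℝ) ^ (-s)) else 0 := hZ.deriv
  have h1 : HasDerivAt (fun t : ℝ => ((LSeries' Zset t : ℝ) : ℂ))
      ((deriv (LSeries' Zset) s : ℝ) : ℂ) s := by
    rw [hd]; exact hZ.ofReal_comp
  have hne : (s:ℂ) ≠ 1 := by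
    simp only [ne_eq, Complex.ofReal_eq_one]; linarith
  have h2 : HasDerivAt (fun t : ℝ => riemannZeta t) (deriv riemannZeta s) s :=
    (differentiableAt_riemannZeta hne).hasDerivAt.comp_ofReal
  have hEq : (fun t : ℝ => ((LSeries' Zset t : ℝ) : ℂ)) =ᶠ[nhds s]
      (fun t : ℝ => riemannZeta t) := by
    filter_upwards [isOpen_Ioi.mem_nhds (show s ∈ Set.Ioi (1:ℝ) from hs)] with t ht
    exact ofReal_Z ht
  exact (h1.congr_of_eventuallyEq hEq.symm).unique h2

/-- The key limit: `Z'/Z + 1/(s-1) → γ` as `s → 1⁺`. -/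
lemma tendsto_Z_logDeriv :
    Tendsto (fun s : ℝ => deriv (LSeries' Zset) s / LSeries' Zset s + 1 / (s - 1))
      (nhdsWithin 1 (Set.Ioi 1)) (nhds Real.eulerMascheroniConstant) := by
  set γ := Real.eulerMascheroniConstant with hγdef
  set fC : ℂ → ℂ := fun z => riemannZeta z - 1 / (z - 1) with hfC
  have hγ : Tendsto fC (nhdsWithin 1 {(1:ℂ)}ᶜ) (nhds (γ:ℂ)) := tendsto_riemannZeta_sub_one_div
  -- a bounded neighbourhood
  set M : ℝ := ‖(γ:ℂ)‖ + 1 with hM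
  have hbdd : ∀ᶠ z in nhdsWithin (1:ℂ) {(1:ℂ)}ᶜ, ‖fC z‖ ≤ M :=
    hγ.norm.eventually (eventually_le_nhds (lt_add_one _))
  rw [eventually_nhdsWithin_iff] at hbdd
  have ht : {z : ℂ | z ∈ ({(1:ℂ)}ᶜ : Set ℂ) → ‖fC z‖ ≤ M} ∈ nhds (1:ℂ) := hbdd
  set t : Set ℂ := {z : ℂ | z ∈ ({(1:ℂ)}ᶜ : Set ℂ) → ‖fC z‖ ≤ M} with htdef
  have hdiff : DifferentiableOn ℂ fC (t \ {1}) := by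
    intro z hz
    have hz1 : z ≠ 1 := hz.2
    have : DifferentiableAt ℂ fC z := by
      refine (differentiableAt_riemannZeta hz1).sub ?_
      refine (differentiableAt_const _).div ((differentiableAt_id.sub_const 1)) ?_
      exact sub_ne_zero.2 hz1
    exact this.differentiableWithinAt
  have hbddA : BddAbove (norm ∘ fC '' (t \ {1})) := by
    refine ⟨M, ?_⟩
    rintro y ⟨z, hz, rfl⟩
    exact hz.1 hz.2
  have hG := Complex.differentiableOn_update_limUnder_of_bddAbove ht hdiff hbddA
  set G : ℂ → ℂ := Function.update fC 1 (limUnder (nhdsWithin 1 {(1:ℂ)}ᶜ) fC) with hGdef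
  have hlim : limUnder (nhdsWithin (1:ℂ) {(1:ℂ)}ᶜ) fC = (γ:ℂ) := hγ.limUnder_eq
  have hG1 : G 1 = (γ:ℂ) := by rw [hGdef, Function.update_self, hlim]
  set u : Set ℂ := interior t with hudef
  have hu : IsOpen u := isOpen_interior
  have h1u : (1:ℂ) ∈ u := mem_interior_iff_mem_nhds.2 ht
  have hGu : DifferentiableOn ℂ G u := hG.mono interior_subset
  have hGanal : AnalyticOnNhd ℂ G u := hGu.analyticOnNhd hu
  have hderivanal : AnalyticOnNhd ℂ (deriv G) u := hGanal.deriv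
  have hderivCont : ContinuousAt (deriv G) 1 := (hderivanal 1 h1u).continuousAt
  have hGcont : ContinuousAt G 1 := (hGanal 1 h1u).continuousAt
  -- the complex limit
  have hcomb : Tendsto (fun z : ℂ => (z - 1) * deriv G z + G z) (nhds 1) (nhds (γ:ℂ)) := by
    have hc : ContinuousAt (fun z : ℂ => (z - 1) * deriv G z + G z) 1 :=
      ((continuousAt_id.sub continuousAt_const).mul hderivCont).add hGcont
    have := hc.tendsto
    simpa [hG1] using this
  have hofReal : Tendsto (fun s : ℝ => (s:ℂ)) (nhdsWithin 1 (Set.Ioi (1:ℝ))) (nhds (1:ℂ)) := by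
    exact (Complex.continuous_ofReal.tendsto (1:ℝ)).mono_left nhdsWithin_le_nhds
  have hreal : Tendsto (fun s : ℝ => ((s:ℂ) - 1) * deriv G s + G s)
      (nhdsWithin 1 (Set.Ioi (1:ℝ))) (nhds (γ:ℂ)) := hcomb.comp hofReal
  -- eventual facts for real s > 1 near 1
  have hev : ∀ᶠ s : ℝ in nhdsWithin 1 (Set.Ioi 1), 1 < s ∧ (s:ℂ) ∈ u := by
    have h1 : ∀ᶠ s : ℝ in nhdsWithin 1 (Set.Ioi 1), 1 < s := self_mem_nhdsWithin
    have h2 : ∀ᶠ s : ℝ in nhdsWithin 1 (Set.Ioi 1), (s:ℂ) ∈ u := by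
      have : {z : ℂ | z ∈ u} ∈ nhds (1:ℂ) := hu.mem_nhds h1u
      exact hofReal.eventually this
    exact h1.and h2
  -- formula for the derivative of ζ in terms of G
  have hderiv_formula : ∀ s : ℝ, 1 < s → (s:ℂ) ∈ u →
      deriv riemannZeta (s:ℂ) = deriv G (s:ℂ) - 1 / ((s:ℂ) - 1) ^ 2 := by
    intro s hs hsu
    have hz1 : (s:ℂ) ≠ 1 := by
      simp only [ne_eq, Complex.ofReal_eq_one]; linarith
    have hGz : HasDerivAt G (deriv G (s:ℂ)) (s:ℂ) :=
      (hGu.differentiableAt (hu.mem_nhds hsu)).hasDerivAt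
    have hinv : HasDerivAt (fun w : ℂ => (w - 1)⁻¹) (-(1:ℂ) / ((s:ℂ) - 1) ^ 2) (s:ℂ) :=
      ((hasDerivAt_id _).sub_const 1).inv (sub_ne_zero.2 hz1)
    have hsum : HasDerivAt (fun w : ℂ => G w + (w - 1)⁻¹)
        (deriv G (s:ℂ) + -(1:ℂ) / ((s:ℂ) - 1) ^ 2) (s:ℂ) := hGz.add hinv
    have hEq : (fun w : ℂ => G w + (w - 1)⁻¹) =ᶠ[nhds (s:ℂ)] riemannZeta := by
      filter_upwards [isOpen_ne.mem_nhds hz1] with w hw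
      have : G w = fC w := Function.update_of_ne hw _ _
      rw [this, hfC]
      simp only [one_div]
      ring
    have := (hsum.congr_of_eventuallyEq hEq.symm).deriv
    rw [this]
    ring
  -- numerator limit
  have hnum : Tendsto (fun s : ℝ => (s - 1) * deriv (LSeries' Zset) s + LSeries' Zset s)
      (nhdsWithin 1 (Set.Ioi 1)) (nhds γ) := by
    have hre : Tendsto (fun s : ℝ => (((s:ℂ) - 1) * deriv G s + G s).re)
        (nhdsWithin 1 (Set.Ioi (1:ℝ))) (nhds γ) := by
      have := (Complex.continuous_re.tendsto ((γ:ℂ))).comp hreal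
      simpa only [Complex.ofReal_re, Function.comp_def] using this
    refine hre.congr' ?_
    filter_upwards [hev] with s hs
    obtain ⟨hs1, hsu⟩ := hs
    have hz1 : (s:ℂ) ≠ 1 := by simp only [ne_eq, Complex.ofReal_eq_one]; linarith
    have hG_eq : G (s:ℂ) = riemannZeta (s:ℂ) - 1 / ((s:ℂ) - 1) := by
      rw [hGdef, Function.update_of_ne hz1, hfC]
    have key : ((s:ℂ) - 1) * deriv G (s:ℂ) + G (s:ℂ)
        = ((s:ℂ) - 1) * deriv riemannZeta (s:ℂ) + riemannZeta (s:ℂ) := by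
      rw [hderiv_formula s hs1 hsu, hG_eq]
      have hne : (s:ℂ) - 1 ≠ 0 := sub_ne_zero.2 hz1
      field_simp
      ring
    rw [key, ← ofReal_Z hs1, ← ofReal_deriv_Z hs1]
    have : ((s:ℂ) - 1) * ((deriv (LSeries' Zset) s : ℝ) : ℂ) + ((LSeries' Zset s : ℝ) : ℂ)
        = (((s - 1) * deriv (LSeries' Zset) s + LSeries' Zset s : ℝ) : ℂ) := by
      push_cast
      ring
    rw [this, Complex.ofReal_re]
  -- denominator limit
  have hden : Tendsto (fun s : ℝ => (s - 1) * LSeries' Zset s)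
      (nhdsWithin 1 (Set.Ioi 1)) (nhds 1) := by
    have hofReal' : Tendsto (fun s : ℝ => (s:ℂ)) (nhdsWithin 1 (Set.Ioi (1:ℝ)))
        (nhdsWithin (1:ℂ) {(1:ℂ)}ᶜ) := by
      refine tendsto_nhdsWithin_of_tendsto_nhds_of_eventually_within _ hofReal ?_
      filter_upwards [self_mem_nhdsWithin] with s hs
      simp only [Set.mem_compl_iff, Set.mem_singleton_iff, Complex.ofReal_eq_one]
      intro h; rw [h] at hs; exact lt_irrefl 1 (Set.mem_Ioi.mp hs)
    have hres := riemannZeta_residue_one.comp hofReal'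
    have hre : Tendsto (fun s : ℝ => (((s:ℂ) - 1) * riemannZeta s).re)
        (nhdsWithin 1 (Set.Ioi (1:ℝ))) (nhds 1) := by
      have := (Complex.continuous_re.tendsto (1:ℂ)).comp hres
      simpa only [Complex.one_re, Function.comp_def] using this
    refine hre.congr' ?_
    filter_upwards [self_mem_nhdsWithin] with s hs
    have hs1 : 1 < s := hs
    rw [← ofReal_Z hs1]
    have : ((s:ℂ) - 1) * ((LSeries' Zset s : ℝ) : ℂ)
        = (((s - 1) * LSeries' Zset s : ℝ) : ℂ) := by push_cast; ring
    rw [this, Complex.ofReal_re]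
  -- combine
  have hquot := hnum.div hden one_ne_zero
  rw [div_one] at hquot
  refine hquot.congr' ?_
  filter_upwards [self_mem_nhdsWithin] with s hs
  have hs1 : 1 < s := hs
  have hZpos : 0 < LSeries' Zset s := lt_of_lt_of_le one_pos (one_le_LSeries' one_mem_Zset hs1)
  have hne1 : s - 1 ≠ 0 := by linarith
  have hne2 : LSeries' Zset s ≠ 0 := ne_of_gt hZpos
  simp only [Pi.div_apply]
  rw [div_add_div _ _ hne2 hne1]
  congr 1 <;> ring

lemma one_mem_Zset' : (1:ℕ) ∈ Zset := by simp [Zset]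
lemma zero_not_mem_Zset' : (0:ℕ) ∉ Zset := by simp [Zset]

lemma one_mem_SPhi {q : ℕ} (hq : q.Prime) : (1:ℕ) ∈ SPhi q := by
  refine ⟨one_pos, ?_⟩
  rw [Nat.totient_one, Nat.dvd_one]
  exact hq.ne_one

lemma zero_not_mem_SPhi {q : ℕ} : (0:ℕ) ∉ SPhi q := fun h => lt_irrefl 0 h.1

lemma one_mem_SOne {q : ℕ} : (1:ℕ) ∈ SOne q := by
  refine ⟨one_pos, fun p hp hp1 => ?_⟩
  exact absurd (Nat.eq_one_of_dvd_one hp1) hp.ne_one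

lemma zero_not_mem_SOne {q : ℕ} : (0:ℕ) ∉ SOne q := fun h => lt_irrefl 0 h.1

/-- derivative of the local factor `1 - q^{-2s}` -/
lemma hasDerivAt_Dfun {q : ℕ} (hq : q.Prime) (s : ℝ) :
    HasDerivAt (fun x : ℝ => 1 - (q : ℝ) ^ (-(2 * x)))
      (2 * Real.log q * (q : ℝ) ^ (-(2 * s))) s := by
  have hq0 : (0:ℝ) < (q:ℝ) := by exact_mod_cast hq.pos
  have hinner : HasDerivAt (fun x : ℝ => -(2 * x)) (-2) s := by
    have h := ((hasDerivAt_id s).const_mul (2 : ℝ)).neg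
    exact h.congr_deriv (by norm_num)
  have hout : HasDerivAt (fun y : ℝ => (q : ℝ) ^ y)
      ((q:ℝ) ^ (-(2 * s)) * Real.log q) (-(2 * s)) :=
    (Real.hasStrictDerivAt_const_rpow hq0 _).hasDerivAt
  have hcomp := hout.comp s hinner
  have h1 : HasDerivAt (fun x : ℝ => (q : ℝ) ^ (-(2 * x)))
      ((q:ℝ) ^ (-(2 * s)) * Real.log q * (-2)) s := hcomp
  have h2 := (hasDerivAt_const s (1:ℝ)).sub h1
  have : 0 - ((q:ℝ) ^ (-(2 * s)) * Real.log q * (-2)) =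
      2 * Real.log q * (q : ℝ) ^ (-(2 * s)) := by ring
  rw [this] at h2
  exact h2

lemma tendsto_Dfactor {q : ℕ} (hq : q.Prime) :
    Tendsto (fun s : ℝ =>
        (2 * Real.log q * (q : ℝ) ^ (-(2 * s))) / (1 - (q : ℝ) ^ (-(2 * s))))
      (nhdsWithin 1 (Set.Ioi 1)) (nhds (2 * Real.log q / ((q : ℝ) ^ 2 - 1))) := by
  have hq0 : (0:ℝ) < (q:ℝ) := by exact_mod_cast hq.pos
  have hq1 : (1:ℝ) < (q:ℝ) := by exact_mod_cast hq.one_lt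
  have hcont : ContinuousAt (fun s : ℝ => (q : ℝ) ^ (-(2 * s))) 1 := by
    have h1 : ContinuousAt (fun y : ℝ => (q : ℝ) ^ y) (-(2 * 1 : ℝ)) :=
      Real.continuousAt_const_rpow (ne_of_gt hq0)
    have h2 : ContinuousAt (fun s : ℝ => -(2 * s)) 1 := by fun_prop
    exact ContinuousAt.comp (g := fun y : ℝ => (q:ℝ) ^ y) (by exact_mod_cast h1) h2
  have hval : (q : ℝ) ^ (-(2 * (1:ℝ))) = ((q : ℝ) ^ (2:ℕ))⁻¹ := by
    rw [show -(2 * (1:ℝ)) = -(2:ℝ) by norm_num, Real.rpow_neg (le_of_lt hq0)]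
    congr 1
    rw [← Real.rpow_natCast (q:ℝ) 2]
    norm_num
  have hlt : (q : ℝ) ^ (-(2 * (1:ℝ))) < 1 := by
    apply Real.rpow_lt_one_of_one_lt_of_neg hq1
    norm_num
  have hden_ne : 1 - (q : ℝ) ^ (-(2 * (1:ℝ))) ≠ 0 := by linarith
  have hcont2 : ContinuousAt (fun s : ℝ =>
      (2 * Real.log q * (q : ℝ) ^ (-(2 * s))) / (1 - (q : ℝ) ^ (-(2 * s)))) 1 := by
    exact ((continuousAt_const.mul hcont).div (continuousAt_const.sub hcont) hden_ne)
  have htend := hcont2.tendsto.mono_left (nhdsWithin_le_nhds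
    (s := Set.Ioi (1:ℝ)))
  have hq2 : (1:ℝ) < (q:ℝ)^(2:ℕ) := by nlinarith
  have hy : ((q:ℝ)^(2:ℕ)) ≠ 0 := by positivity
  have hy1 : ((q:ℝ)^(2:ℕ)) - 1 ≠ 0 := by nlinarith
  have heq : 2 * Real.log q * (q:ℝ) ^ (-(2 * (1:ℝ))) / (1 - (q:ℝ) ^ (-(2 * (1:ℝ))))
      = 2 * Real.log q / ((q : ℝ) ^ 2 - 1) := by
    rw [hval]
    field_simp
  rw [← heq]
  exact htend

theorem eulerKronecker_SOne_eq' (q : ℕ) (hq : q.Prime) (γphi γone : ℝ)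
    (hphi : IsEulerKronecker (SPhi q) (((q : ℝ) - 2) / ((q : ℝ) - 1)) γphi)
    (hone : IsEulerKronecker (SOne q) (1 / ((q : ℝ) - 1)) γone) :
    γone = Real.eulerMascheroniConstant - γphi +
      2 * Real.log q / ((q : ℝ) ^ 2 - 1) := by
  have hq1 : (1:ℝ) < (q:ℝ) := by exact_mod_cast hq.one_lt
  have hqm1 : (q:ℝ) - 1 ≠ 0 := by linarith
  -- sum of the two hypotheses
  have h1 : Tendsto (fun s : ℝ =>
      (deriv (LSeries' (SPhi q)) s / LSeries' (SPhi q) s + ((q : ℝ) - 2) / ((q : ℝ) - 1) / (s - 1))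
      + (deriv (LSeries' (SOne q)) s / LSeries' (SOne q) s + 1 / ((q : ℝ) - 1) / (s - 1)))
      (nhdsWithin 1 (Set.Ioi 1)) (nhds (γphi + γone)) := hphi.add hone
  -- sum of the two analytic lemmas
  have h2 : Tendsto (fun s : ℝ =>
      (deriv (LSeries' Zset) s / LSeries' Zset s + 1 / (s - 1))
      + (2 * Real.log q * (q : ℝ) ^ (-(2 * s))) / (1 - (q : ℝ) ^ (-(2 * s))))
      (nhdsWithin 1 (Set.Ioi 1))
      (nhds (Real.eulerMascheroniConstant + 2 * Real.log q / ((q : ℝ) ^ 2 - 1))) :=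
    tendsto_Z_logDeriv.add (tendsto_Dfactor hq)
  -- the two functions agree eventually
  have hEq : ∀ᶠ s : ℝ in nhdsWithin 1 (Set.Ioi 1),
      (deriv (LSeries' (SPhi q)) s / LSeries' (SPhi q) s + ((q : ℝ) - 2) / ((q : ℝ) - 1) / (s - 1))
      + (deriv (LSeries' (SOne q)) s / LSeries' (SOne q) s + 1 / ((q : ℝ) - 1) / (s - 1))
      = (deriv (LSeries' Zset) s / LSeries' Zset s + 1 / (s - 1))
      + (2 * Real.log q * (q : ℝ) ^ (-(2 * s))) / (1 - (q : ℝ) ^ (-(2 * s))) := by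
    filter_upwards [self_mem_nhdsWithin] with s hs
    have hs1 : 1 < s := hs
    have hsne : s - 1 ≠ 0 := by linarith
    -- positivity facts
    have hApos : 0 < LSeries' (SPhi q) s :=
      lt_of_lt_of_le one_pos (one_le_LSeries' (one_mem_SPhi hq) hs1)
    have hBpos : 0 < LSeries' (SOne q) s :=
      lt_of_lt_of_le one_pos (one_le_LSeries' one_mem_SOne hs1)
    have hCpos : 0 < LSeries' Zset s :=
      lt_of_lt_of_le one_pos (one_le_LSeries' one_mem_Zset' hs1)
    have hq0 : (0:ℝ) < (q:ℝ) := by linarith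
    have hDlt : (q : ℝ) ^ (-(2 * s)) < 1 :=
      Real.rpow_lt_one_of_one_lt_of_neg hq1 (by linarith)
    have hDpos : 0 < 1 - (q : ℝ) ^ (-(2 * s)) := by linarith
    -- derivatives
    have hA := hasDerivAt_LSeries' (SPhi q) zero_not_mem_SPhi hs1
    have hB := hasDerivAt_LSeries' (SOne q) zero_not_mem_SOne hs1
    have hC := hasDerivAt_LSeries' Zset zero_not_mem_Zset' hs1
    have hD := hasDerivAt_Dfun hq s
    set a := deriv (LSeries' (SPhi q)) s with hadef
    set b := deriv (LSeries' (SOne q)) s with hbdef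
    set c := deriv (LSeries' Zset) s with hcdef
    have hA' : HasDerivAt (LSeries' (SPhi q)) a s := by rw [hadef, hA.deriv]; exact hA
    have hB' : HasDerivAt (LSeries' (SOne q)) b s := by rw [hbdef, hB.deriv]; exact hB
    have hC' : HasDerivAt (LSeries' Zset) c s := by rw [hcdef, hC.deriv]; exact hC
    -- product rule and uniqueness
    have hprod1 : HasDerivAt (fun x : ℝ => LSeries' (SPhi q) x * LSeries' (SOne q) x)
        (a * LSeries' (SOne q) s + LSeries' (SPhi q) s * b) s := hA'.mul hB'
    have hprod2 : HasDerivAt (fun x : ℝ => LSeries' Zset x * (1 - (q : ℝ) ^ (-(2 * x))))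
        (c * (1 - (q : ℝ) ^ (-(2 * s))) + LSeries' Zset s
          * (2 * Real.log q * (q : ℝ) ^ (-(2 * s)))) s := hC'.mul hD
    have hfEq : (fun x : ℝ => LSeries' (SPhi q) x * LSeries' (SOne q) x) =ᶠ[nhds s]
        (fun x : ℝ => LSeries' Zset x * (1 - (q : ℝ) ^ (-(2 * x)))) := by
      filter_upwards [isOpen_Ioi.mem_nhds (Set.mem_Ioi.mpr hs1)] with x hx
      rw [LSeries'_mul_eq hq hx, LSeries'_T2_eq hq hx]
    have huniq : a * LSeries' (SOne q) s + LSeries' (SPhi q) s * b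
        = c * (1 - (q : ℝ) ^ (-(2 * s))) + LSeries' Zset s
          * (2 * Real.log q * (q : ℝ) ^ (-(2 * s))) :=
      (hprod1.congr_of_eventuallyEq hfEq.symm).unique hprod2
    have hABCD : LSeries' (SPhi q) s * LSeries' (SOne q) s
        = LSeries' Zset s * (1 - (q : ℝ) ^ (-(2 * s))) := by
      rw [LSeries'_mul_eq hq hs1, LSeries'_T2_eq hq hs1]
    -- split in log-derivatives
    have hlog : a / LSeries' (SPhi q) s + b / LSeries' (SOne q) s
        = c / LSeries' Zset s
          + (2 * Real.log q * (q : ℝ) ^ (-(2 * s))) / (1 - (q : ℝ) ^ (-(2 * s))) := by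
      rw [div_add_div _ _ (ne_of_gt hApos) (ne_of_gt hBpos),
        div_add_div _ _ (ne_of_gt hCpos) (ne_of_gt hDpos), huniq, hABCD]
    have hq1' : (q:ℝ) - 1 ≠ 0 := by linarith
    have hdelta : ((q : ℝ) - 2) / ((q : ℝ) - 1) / (s - 1) + 1 / ((q : ℝ) - 1) / (s - 1)
        = 1 / (s - 1) := by
      rw [← add_div, ← add_div, show (q:ℝ) - 2 + 1 = q - 1 by ring, div_self hqm1]
    calc (a / LSeries' (SPhi q) s + ((q : ℝ) - 2) / ((q : ℝ) - 1) / (s - 1))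
        + (b / LSeries' (SOne q) s + 1 / ((q : ℝ) - 1) / (s - 1))
        = (a / LSeries' (SPhi q) s + b / LSeries' (SOne q) s)
          + (((q : ℝ) - 2) / ((q : ℝ) - 1) / (s - 1) + 1 / ((q : ℝ) - 1) / (s - 1)) := by ring
      _ = (c / LSeries' Zset s
          + (2 * Real.log q * (q : ℝ) ^ (-(2 * s))) / (1 - (q : ℝ) ^ (-(2 * s))))
          + 1 / (s - 1) := by rw [hlog, hdelta]
      _ = (c / LSeries' Zset s + 1 / (s - 1))
          + (2 * Real.log q * (q : ℝ) ^ (-(2 * s))) / (1 - (q : ℝ) ^ (-(2 * s))) := by ring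
  have h1' := h1.congr' hEq
  have := tendsto_nhds_unique h1' h2
  linarith

end EKaux

/-- For a prime `q`, the Euler–Kronecker constants of `S'_{q;1}` (with density
`1/(q-1)`) and of `S_{φ;q}` (with density `(q-2)/(q-1)`) satisfy
`γ_{S'_{q;1}} = γ - γ_{S_{φ;q}} + 2 log q / (q² - 1)`. -/
theorem eulerKronecker_SOne_eq (q : ℕ) (hq : q.Prime) (γphi γone : ℝ)
    (hphi : IsEulerKronecker (SPhi q) (((q : ℝ) - 2) / ((q : ℝ) - 1)) γphi)
    (hone : IsEulerKronecker (SOne q) (1 / ((q : ℝ) - 1)) γone) :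
    γone = Real.eulerMascheroniConstant - γphi +
      2 * Real.log q / ((q : ℝ) ^ 2 - 1) := by
  exact EKaux.eulerKronecker_SOne_eq' q hq γphi γone hphi hone
end

section
/- Let M(1,√2) be the common limit of the sequences a_0 = 1, b_0 = √2, a_{n+1} = (a_n + b_n)/2, b_{n+1} = √(a_n · b_n). Then 1/M(1,√2) = (2/π) · ∫₀¹ dx/√(1 − x⁴). -/
open Filter Real

open Set MeasureTheory

/-- Lagrange's AGM iteration started from `(1, √2)`:
`a₀ = 1`, `b₀ = √2`, `a_{n+1} = (a_n + b_n)/2`, `b_{n+1} = √(a_n b_n)`. -/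
noncomputable def agm : ℕ → ℝ × ℝ
  | 0 => (1, Real.sqrt 2)
  | n + 1 => (((agm n).1 + (agm n).2) / 2, Real.sqrt ((agm n).1 * (agm n).2))

lemma integrable_inv_sq_add (c : ℝ) (hc : 0 < c) :
    Integrable fun x : ℝ => (x ^ 2 + c ^ 2)⁻¹ := by
  have hK : (0:ℝ) < max 1 (c ^ 2)⁻¹ := lt_max_of_lt_left one_pos
  apply (integrable_inv_one_add_sq.const_mul (max 1 (c ^ 2)⁻¹)).mono
  · exact (Continuous.inv₀ (by continuity) fun x => by positivity).aestronglyMeasurable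
  · filter_upwards with x
    have h1 : (0:ℝ) < x ^ 2 + c ^ 2 := by positivity
    have h2 : (0:ℝ) < 1 + x ^ 2 := by positivity
    rw [Real.norm_eq_abs, Real.norm_eq_abs, abs_of_pos (by positivity),
      abs_of_pos (by positivity)]
    have h4 : 1 ≤ (max 1 (c ^ 2)⁻¹) * c ^ 2 := by
      rw [← inv_mul_cancel₀ (ne_of_gt (pow_pos hc 2))]
      exact mul_le_mul_of_nonneg_right (le_max_right _ _) (le_of_lt (pow_pos hc 2))
    rw [← one_div, show ((1:ℝ) + x ^ 2)⁻¹ = 1 / (1 + x ^ 2) from (one_div _).symm, mul_one_div, div_le_div_iff₀ h1 h2]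
    nlinarith [le_max_left 1 ((c ^ 2)⁻¹), sq_nonneg x]

lemma integral_inv_sq_add (c : ℝ) (hc : 0 < c) :
    ∫ x in Ioi (0:ℝ), (x ^ 2 + c ^ 2)⁻¹ = π / (2 * c) := by
  have h : ∀ x ∈ Ioi (0:ℝ), HasDerivAt (fun x => arctan (x / c) / c) ((x ^ 2 + c ^ 2)⁻¹) x := by
    intro x _
    have := ((hasDerivAt_arctan (x / c)).comp x ((hasDerivAt_id x).div_const c)).div_const c
    refine this.congr_deriv ?_
    field_simp
    ring
  have hint : IntegrableOn (fun x : ℝ => (x ^ 2 + c ^ 2)⁻¹) (Ioi 0) :=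
    (integrable_inv_sq_add c hc).integrableOn
  have htend : Tendsto (fun x : ℝ => arctan (x / c) / c) atTop (nhds ((π / 2) / c)) := by
    exact ((tendsto_nhds_of_tendsto_nhdsWithin tendsto_arctan_atTop).comp
      (tendsto_id.atTop_div_const hc)).div_const c
  have hcont : ContinuousWithinAt (fun x => arctan (x / c) / c) (Ici 0) 0 :=
    (Continuous.continuousWithinAt (by continuity))
  rw [integral_Ioi_of_hasDerivAt_of_tendsto hcont h hint htend]
  simp [arctan_zero]
  ring

noncomputable def J (a b : ℝ) : ℝ :=
  ∫ x in Ioi (0:ℝ), (Real.sqrt ((x ^ 2 + a ^ 2) * (x ^ 2 + b ^ 2)))⁻¹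

lemma g_cont (a b : ℝ) (ha : 0 < a) (hb : 0 < b) :
    Continuous fun x : ℝ => (Real.sqrt ((x ^ 2 + a ^ 2) * (x ^ 2 + b ^ 2)))⁻¹ := by
  apply Continuous.inv₀ (by fun_prop)
  intro x
  have : (0:ℝ) < (x ^ 2 + a ^ 2) * (x ^ 2 + b ^ 2) := by positivity
  positivity

lemma g_le (a b : ℝ) (ha : 0 < a) (hb : 0 < b) (x : ℝ) :
    (Real.sqrt ((x ^ 2 + a ^ 2) * (x ^ 2 + b ^ 2)))⁻¹ ≤ (x ^ 2 + (min a b) ^ 2)⁻¹ := by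
  have h1 : (0:ℝ) < x ^ 2 + (min a b) ^ 2 := by
    have : 0 < min a b := lt_min ha hb
    positivity
  apply inv_anti₀ h1
  rw [show x ^ 2 + min a b ^ 2 = Real.sqrt ((x ^ 2 + min a b ^ 2) ^ 2) from
    (Real.sqrt_sq (by positivity)).symm]
  apply Real.sqrt_le_sqrt
  have h2 : min a b ^ 2 ≤ a ^ 2 := by
    have := min_le_left a b; have := (lt_min ha hb).le; nlinarith
  have h3 : min a b ^ 2 ≤ b ^ 2 := by
    have := min_le_right a b; have := (lt_min ha hb).le; nlinarith
  nlinarith [sq_nonneg x]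

lemma le_g (a b : ℝ) (ha : 0 < a) (hb : 0 < b) (x : ℝ) :
    (x ^ 2 + (max a b) ^ 2)⁻¹ ≤ (Real.sqrt ((x ^ 2 + a ^ 2) * (x ^ 2 + b ^ 2)))⁻¹ := by
  have hm : 0 < max a b := lt_max_of_lt_left ha
  have h0 : (0:ℝ) < (x ^ 2 + a ^ 2) * (x ^ 2 + b ^ 2) := by positivity
  apply inv_anti₀ (Real.sqrt_pos.2 h0)
  rw [show x ^ 2 + max a b ^ 2 = Real.sqrt ((x ^ 2 + max a b ^ 2) ^ 2) from
    (Real.sqrt_sq (by positivity)).symm]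
  apply Real.sqrt_le_sqrt
  have h2 : a ^ 2 ≤ max a b ^ 2 := by
    have := le_max_left a b; nlinarith
  have h3 : b ^ 2 ≤ max a b ^ 2 := by
    have := le_max_right a b; nlinarith
  nlinarith [sq_nonneg x]

lemma g_integrable (a b : ℝ) (ha : 0 < a) (hb : 0 < b) :
    Integrable fun x : ℝ => (Real.sqrt ((x ^ 2 + a ^ 2) * (x ^ 2 + b ^ 2)))⁻¹ := by
  apply (integrable_inv_sq_add (min a b) (lt_min ha hb)).mono
    (g_cont a b ha hb).aestronglyMeasurable
  filter_upwards with x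
  have h0 : (0:ℝ) < (x ^ 2 + a ^ 2) * (x ^ 2 + b ^ 2) := by positivity
  have h1 : (0:ℝ) < x ^ 2 + (min a b) ^ 2 := by
    have : 0 < min a b := lt_min ha hb; positivity
  rw [Real.norm_eq_abs, Real.norm_eq_abs, abs_of_pos (by positivity),
    abs_of_pos (by positivity)]
  exact g_le a b ha hb x

lemma J_self (c : ℝ) (hc : 0 < c) : J c c = π / (2 * c) := by
  rw [← integral_inv_sq_add c hc, J]
  apply setIntegral_congr_fun measurableSet_Ioi
  intro x _
  simp only
  rw [← sq, Real.sqrt_sq (by positivity)]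

lemma J_le (a b : ℝ) (ha : 0 < a) (hb : 0 < b) : J a b ≤ π / (2 * min a b) := by
  have hm : 0 < min a b := lt_min ha hb
  rw [← integral_inv_sq_add (min a b) hm, J]
  apply setIntegral_mono_on ((g_integrable a b ha hb).integrableOn)
    ((integrable_inv_sq_add _ hm).integrableOn) measurableSet_Ioi
  exact fun x _ => g_le a b ha hb x

lemma le_J (a b : ℝ) (ha : 0 < a) (hb : 0 < b) : π / (2 * max a b) ≤ J a b := by
  have hm : 0 < max a b := lt_max_of_lt_left ha
  rw [← integral_inv_sq_add (max a b) hm, J]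
  apply setIntegral_mono_on ((integrable_inv_sq_add _ hm).integrableOn)
    ((g_integrable a b ha hb).integrableOn) measurableSet_Ioi
  exact fun x _ => le_g a b ha hb x

lemma integral_Ioi_eq_half (g : ℝ → ℝ) (hg : Integrable g) (heven : ∀ x, g (-x) = g x) :
    ∫ x in Ioi (0:ℝ), g x = (1 / 2) * ∫ x, g x := by
  have h1 : ∫ x in Iic (0:ℝ), g x = ∫ x in Ioi (0:ℝ), g x := by
    calc ∫ x in Iic (0:ℝ), g x = ∫ x in Iic (-(0:ℝ)), g x := by norm_num
      _ = ∫ x in Ioi (0:ℝ), g (-x) := (integral_comp_neg_Ioi 0 g).symm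
      _ = ∫ x in Ioi (0:ℝ), g x := by simp_rw [heven]
  have h2 := intervalIntegral.integral_Iic_add_Ioi (b := (0:ℝ)) hg.integrableOn hg.integrableOn
  linarith

lemma J_step (a b : ℝ) (ha : 0 < a) (hb : 0 < b) :
    J a b = J ((a + b) / 2) (Real.sqrt (a * b)) := by
  set p := (a + b) / 2 with hp_def
  set c := Real.sqrt (a * b) with hc_def
  have hp : 0 < p := by positivity
  have hc : 0 < c := Real.sqrt_pos.2 (by positivity)
  have hc2 : c ^ 2 = a * b := Real.sq_sqrt (by positivity)
  set g : ℝ → ℝ := fun t => (Real.sqrt ((t ^ 2 + p ^ 2) * (t ^ 2 + c ^ 2)))⁻¹ with hg_def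
  set φ : ℝ → ℝ := fun x => (x - a * b / x) / 2 with hφ_def
  set φ' : ℝ → ℝ := fun x => (1 + a * b / x ^ 2) / 2 with hφ'_def
  -- derivative
  have hderiv : ∀ x ∈ Ioi (0:ℝ), HasDerivWithinAt φ (φ' x) (Ioi 0) x := by
    intro x hx
    have hx0 : x ≠ 0 := ne_of_gt hx
    have h2 : HasDerivAt (fun y => (id y - a * b * y⁻¹) / 2) ((1 - a * b * -(x ^ 2)⁻¹) / 2) x :=
      ((hasDerivAt_id x).sub ((hasDerivAt_inv hx0).const_mul (a * b))).div_const 2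
    have h3 : φ = fun y => (id y - a * b * y⁻¹) / 2 :=
      funext fun y => by simp [hφ_def, div_eq_mul_inv]
    have h4 : φ' x = (1 - a * b * -(x ^ 2)⁻¹) / 2 := by
      simp only [hφ'_def]
      field_simp
      ring
    rw [h3, h4]
    exact h2.hasDerivWithinAt
  -- left inverse
  have hkey : ∀ z : ℝ, 0 < z → φ z + Real.sqrt ((φ z) ^ 2 + a * b) = z := by
    intro z hz
    have h1 : (φ z) ^ 2 + a * b = ((z ^ 2 + a * b) / (2 * z)) ^ 2 := by
      simp only [hφ_def]; field_simp; ring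
    rw [h1, Real.sqrt_sq (by positivity)]
    simp only [hφ_def]; field_simp; ring
  have hinj : InjOn φ (Ioi 0) := by
    intro x hx y hy hxy
    have := hkey x hx
    rw [hxy, hkey y hy] at this
    exact this.symm
  -- surjectivity
  have himg : φ '' Ioi 0 = univ := by
    apply eq_univ_of_forall
    intro t
    set s := Real.sqrt (t ^ 2 + a * b) with hs_def
    have hs2 : s ^ 2 = t ^ 2 + a * b := Real.sq_sqrt (by positivity)
    have habs : |t| < s := by
      rw [hs_def, ← Real.sqrt_sq_eq_abs]
      exact Real.sqrt_lt_sqrt (sq_nonneg t) (by nlinarith)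
    have hxpos : 0 < t + s := by
      have := neg_abs_le t
      linarith
    refine ⟨t + s, hxpos, ?_⟩
    have hq : a * b / (t + s) = s - t := by
      rw [div_eq_iff (ne_of_gt hxpos)]; nlinarith [hs2]
    simp only [hφ_def]
    rw [hq]
    ring
  -- pointwise identity
  have hpt : ∀ x ∈ Ioi (0:ℝ), |φ' x| • g (φ x)
      = 2 * (Real.sqrt ((x ^ 2 + a ^ 2) * (x ^ 2 + b ^ 2)))⁻¹ := by
    intro x hx
    have hx0 : (0:ℝ) < x := hx
    have hA : (0:ℝ) < (x ^ 2 + a ^ 2) * (x ^ 2 + b ^ 2) := by positivity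
    have h1 : (φ x) ^ 2 + p ^ 2 = ((x ^ 2 + a ^ 2) * (x ^ 2 + b ^ 2)) / (2 * x) ^ 2 := by
      simp only [hφ_def, hp_def]; field_simp; ring
    have h2 : (φ x) ^ 2 + c ^ 2 = ((x ^ 2 + a * b) / (2 * x)) ^ 2 := by
      rw [hc2]; simp only [hφ_def]; field_simp; ring
    have hsqrtA : 0 < Real.sqrt ((x ^ 2 + a ^ 2) * (x ^ 2 + b ^ 2)) := Real.sqrt_pos.2 hA
    have h3 : Real.sqrt ((φ x ^ 2 + p ^ 2) * (φ x ^ 2 + c ^ 2))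
        = Real.sqrt ((x ^ 2 + a ^ 2) * (x ^ 2 + b ^ 2)) / (2 * x) * ((x ^ 2 + a * b) / (2 * x)) := by
      rw [Real.sqrt_mul (by positivity), h1, h2, Real.sqrt_sq (by positivity),
        Real.sqrt_div hA.le, Real.sqrt_sq (by positivity)]
    have h4 : |φ' x| = (x ^ 2 + a * b) / (2 * x ^ 2) := by
      rw [abs_of_pos (by simp only [hφ'_def]; positivity)]
      simp only [hφ'_def]
      rw [div_eq_div_iff (two_ne_zero) (by positivity)]
      field_simp
    rw [smul_eq_mul, h4, hg_def]
    simp only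
    rw [h3]
    have hab : (0:ℝ) < x ^ 2 + a * b := by positivity
    field_simp
  have heven : ∀ t : ℝ, g (-t) = g t := fun t => by simp [hg_def]
  have hchain : (∫ x, g x) = 2 * J a b := by
    rw [← setIntegral_univ, ← himg,
      integral_image_eq_integral_abs_deriv_smul measurableSet_Ioi hderiv hinj g,
      setIntegral_congr_fun measurableSet_Ioi hpt, MeasureTheory.integral_const_mul]
    rfl
  have hJ : J ((a + b) / 2) (Real.sqrt (a * b)) = ∫ x in Ioi (0:ℝ), g x := rfl
  rw [hJ, integral_Ioi_eq_half g (g_integrable p c hp hc) heven, hchain]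
  ring

lemma lemniscate_eq :
    ∫ x in (0:ℝ)..1, 1 / Real.sqrt (1 - x ^ 4) = J 1 (Real.sqrt 2) := by
  set s : ℝ → ℝ := fun x => Real.sqrt (x ^ 2 + 2) with hs_def
  have hs2 : ∀ x : ℝ, s x ^ 2 = x ^ 2 + 2 := fun x => Real.sq_sqrt (by positivity)
  have hspos : ∀ x : ℝ, 0 < s x := fun x => Real.sqrt_pos.2 (by positivity)
  set f : ℝ → ℝ := fun x => x / s x with hf_def
  set f' : ℝ → ℝ := fun x => 2 / ((x ^ 2 + 2) * s x) with hf'_def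
  have hderiv : ∀ x ∈ Ioi (0:ℝ), HasDerivWithinAt f (f' x) (Ioi 0) x := by
    intro x _
    have hx2 : (x ^ 2 + 2 : ℝ) ≠ 0 := by positivity
    have hsx : s x ≠ 0 := ne_of_gt (hspos x)
    have hds : HasDerivAt s (x / s x) x := by
      have h0 := (Real.hasDerivAt_sqrt hx2).comp x ((hasDerivAt_pow 2 x).add_const 2)
      refine h0.congr_deriv ?_
      simp only [hs_def]
      field_simp
      ring
    have hdf : HasDerivAt f (f' x) x := by
      have h1 := (hasDerivAt_id x).div hds hsx
      refine h1.congr_deriv ?_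
      simp only [hf'_def, id_eq, one_mul]
      rw [show (s x - x * (x / s x)) / s x ^ 2 = (s x ^ 2 - x ^ 2) / (s x ^ 2 * s x) from by
        field_simp, hs2]
      norm_num
    exact hdf.hasDerivWithinAt
  have hinj : InjOn f (Ioi 0) := by
    intro x hx y hy hxy
    have hx0 : (0:ℝ) < x := hx
    have hy0 : (0:ℝ) < y := hy
    simp only [hf_def] at hxy
    rw [div_eq_div_iff (hspos x).ne' (hspos y).ne'] at hxy
    have hsq : x ^ 2 * (y ^ 2 + 2) = y ^ 2 * (x ^ 2 + 2) := by
      have := congrArg (fun t => t ^ 2) hxy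
      simp only [mul_pow] at this
      rw [hs2 x, hs2 y] at this
      linarith
    have : x ^ 2 = y ^ 2 := by nlinarith
    nlinarith
  have himg : f '' Ioi 0 = Ioo 0 1 := by
    ext u
    constructor
    · rintro ⟨x, hx, rfl⟩
      have hx0 : (0:ℝ) < x := hx
      refine ⟨div_pos hx0 (hspos x), ?_⟩
      rw [hf_def]
      rw [div_lt_one (hspos x)]
      rw [hs_def]
      exact (Real.lt_sqrt hx0.le).2 (by linarith)
    · rintro ⟨hu0, hu1⟩
      have h1u : (0:ℝ) < 1 - u ^ 2 := by nlinarith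
      set x := Real.sqrt 2 * u / Real.sqrt (1 - u ^ 2) with hx_def
      have hsu : Real.sqrt (1 - u ^ 2) > 0 := Real.sqrt_pos.2 h1u
      have hxpos : 0 < x := by
        have h2 : (0:ℝ) < Real.sqrt 2 := Real.sqrt_pos.2 two_pos
        positivity
      have hx2 : x ^ 2 = 2 * u ^ 2 / (1 - u ^ 2) := by
        rw [hx_def, div_pow, mul_pow, Real.sq_sqrt two_pos.le, Real.sq_sqrt h1u.le]
      have hxs : x ^ 2 + 2 = 2 / (1 - u ^ 2) := by
        rw [hx2]; field_simp; ring
      have hsx : s x = Real.sqrt 2 / Real.sqrt (1 - u ^ 2) := by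
        rw [hs_def]
        simp only
        rw [hxs, Real.sqrt_div two_pos.le]
      refine ⟨x, hxpos, ?_⟩
      rw [hf_def]
      simp only
      rw [hsx, hx_def]
      have h2 : Real.sqrt 2 ≠ 0 := (Real.sqrt_pos.2 two_pos).ne'
      field_simp
  have hpt : ∀ x ∈ Ioi (0:ℝ), |f' x| • (1 / Real.sqrt (1 - f x ^ 4))
      = (Real.sqrt ((x ^ 2 + 1 ^ 2) * (x ^ 2 + Real.sqrt 2 ^ 2)))⁻¹ := by
    intro x hx
    have hx0 : (0:ℝ) < x := hx
    have hxx : (0:ℝ) < x ^ 2 + 2 := by positivity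
    have h1 : 1 - f x ^ 4 = 4 * (x ^ 2 + 1) / (x ^ 2 + 2) ^ 2 := by
      rw [hf_def]
      simp only
      rw [div_pow, show s x ^ 4 = (s x ^ 2) ^ 2 from by ring, hs2 x]
      field_simp
      ring
    have h2 : Real.sqrt (1 - f x ^ 4) = 2 * Real.sqrt (x ^ 2 + 1) / (x ^ 2 + 2) := by
      rw [h1, show 4 * (x ^ 2 + 1) / (x ^ 2 + 2) ^ 2
          = (2 * Real.sqrt (x ^ 2 + 1) / (x ^ 2 + 2)) ^ 2 from by
        rw [div_pow, mul_pow, Real.sq_sqrt (by positivity)]; ring,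
        Real.sqrt_sq (by positivity)]
    have h3 : Real.sqrt ((x ^ 2 + 1 ^ 2) * (x ^ 2 + Real.sqrt 2 ^ 2))
        = Real.sqrt (x ^ 2 + 1) * s x := by
      rw [Real.sq_sqrt two_pos.le, one_pow, Real.sqrt_mul (by positivity)]
    have h4 : |f' x| = 2 / ((x ^ 2 + 2) * s x) := by
      simp only [hf'_def]
      rw [abs_of_pos (div_pos two_pos (mul_pos hxx (hspos x)))]
    rw [smul_eq_mul, h4, h2, h3]
    have h5 : Real.sqrt (x ^ 2 + 1) > 0 := Real.sqrt_pos.2 (by positivity)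
    have h6 := hspos x
    have h7 := hs2 x
    field_simp
  have hIoo : ∫ x in (0:ℝ)..1, 1 / Real.sqrt (1 - x ^ 4)
      = ∫ x in Ioo (0:ℝ) 1, 1 / Real.sqrt (1 - x ^ 4) := by
    rw [intervalIntegral.integral_of_le zero_le_one, MeasureTheory.integral_Ioc_eq_integral_Ioo]
  rw [hIoo, ← himg,
    integral_image_eq_integral_abs_deriv_smul measurableSet_Ioi hderiv hinj
      (fun u => 1 / Real.sqrt (1 - u ^ 4)),
    setIntegral_congr_fun measurableSet_Ioi hpt]
  rfl

lemma agm_ge_one : ∀ n, 1 ≤ (agm n).1 ∧ 1 ≤ (agm n).2 := by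
  intro n
  induction n with
  | zero =>
    refine ⟨le_refl 1, ?_⟩
    rw [show (1:ℝ) = Real.sqrt 1 from (Real.sqrt_one).symm]
    exact Real.sqrt_le_sqrt one_le_two
  | succ n ih =>
    obtain ⟨h1, h2⟩ := ih
    constructor
    · show 1 ≤ ((agm n).1 + (agm n).2) / 2
      linarith
    · show 1 ≤ Real.sqrt ((agm n).1 * (agm n).2)
      rw [show (1:ℝ) = Real.sqrt 1 from (Real.sqrt_one).symm]
      exact Real.sqrt_le_sqrt (by nlinarith)

lemma J_agm (n : ℕ) : J (agm n).1 (agm n).2 = J 1 (Real.sqrt 2) := by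
  induction n with
  | zero => rfl
  | succ n ih =>
    obtain ⟨h1, h2⟩ := agm_ge_one n
    rw [show (agm (n + 1)).1 = ((agm n).1 + (agm n).2) / 2 from rfl,
      show (agm (n + 1)).2 = Real.sqrt ((agm n).1 * (agm n).2) from rfl,
      ← J_step (agm n).1 (agm n).2 (by linarith) (by linarith), ih]

/-- Gauss' formula: if `M = M(1,√2)` is the common limit of Lagrange's AGM iteration
started from `1` and `√2`, then `1/M = (2/π) ∫₀¹ dx / √(1 - x⁴)`. -/
theorem gauss_lemniscate (M : ℝ)
    (hA : Tendsto (fun n => (agm n).1) atTop (nhds M))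
    (hB : Tendsto (fun n => (agm n).2) atTop (nhds M)) :
    1 / M = (2 / Real.pi) * ∫ x in (0:ℝ)..1, 1 / Real.sqrt (1 - x ^ 4) := by
  have hM : 1 ≤ M := ge_of_tendsto' hA fun n => (agm_ge_one n).1
  have hM0 : 0 < M := lt_of_lt_of_le one_pos hM
  set K := J 1 (Real.sqrt 2) with hK_def
  have hmin : Tendsto (fun n => min (agm n).1 (agm n).2) atTop (nhds M) := by
    have := hA.min hB
    rwa [min_self] at this
  have hmax : Tendsto (fun n => max (agm n).1 (agm n).2) atTop (nhds M) := by
    have := hA.max hB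
    rwa [max_self] at this
  have htmin : Tendsto (fun n => π / (2 * min (agm n).1 (agm n).2)) atTop
      (nhds (π / (2 * M))) :=
    tendsto_const_nhds.div (hmin.const_mul 2) (by positivity)
  have htmax : Tendsto (fun n => π / (2 * max (agm n).1 (agm n).2)) atTop
      (nhds (π / (2 * M))) :=
    tendsto_const_nhds.div (hmax.const_mul 2) (by positivity)
  have hub : K ≤ π / (2 * M) :=
    ge_of_tendsto' htmin fun n => by
      rw [hK_def, ← J_agm n]
      exact J_le _ _ (by linarith [(agm_ge_one n).1]) (by linarith [(agm_ge_one n).2])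
  have hlb : π / (2 * M) ≤ K :=
    le_of_tendsto' htmax fun n => by
      rw [hK_def, ← J_agm n]
      exact le_J _ _ (by linarith [(agm_ge_one n).1]) (by linarith [(agm_ge_one n).2])
  have hK : K = π / (2 * M) := le_antisymm hub hlb
  rw [lemniscate_eq, ← hK_def, hK]
  have hπ : π ≠ 0 := Real.pi_ne_zero
  field_simp
end

section
/- Let D ≤ −3 be a fundamental discriminant. For every real s > 1, (Σ_{n ∈ S_D} n^{−s})² = ζ(s) · L(s, χ_D) · ∏_{p : (D/p) = −1} (1 − p^{−2s})^{−1} · ∏_{p | D} (1 − p^{−s}), where ζ is the Riemann zeta function, L(s,χ_D) = Σ_{n≥1} χ_D(n)·n^{−s}, and the products run over primes. -/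
open Filter Real
open scoped Classical

/-- The Kronecker symbol `(D/p)` at a prime `p`: it is `0` if `p ∣ D`, equals the
Jacobi symbol `(D|p)` for odd `p ∤ D`, and for `p = 2 ∤ D` equals `1` if
`D ≡ 1 (mod 8)` and `-1` if `D ≡ 5 (mod 8)`. -/
def kron (D : ℤ) (p : ℕ) : ℤ :=
  if (p : ℤ) ∣ D then 0
  else if p = 2 then (if D % 8 = 1 then 1 else -1)
  else jacobiSym D p

/-- `D` is a fundamental discriminant: either `D ≡ 1 (mod 4)` and `D` is squarefree,
or `D = 4m` with `m` squarefree and `m ≡ 2` or `3 (mod 4)`. -/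
def IsFundamentalDiscriminant (D : ℤ) : Prop :=
  (D % 4 = 1 ∧ Squarefree D) ∨
  (∃ m : ℤ, D = 4 * m ∧ Squarefree m ∧ (m % 4 = 2 ∨ m % 4 = 3))

/-- `S_D`: the multiplicative semigroup generated by the primes `p` with
`(D/p) = 1` together with the squares of the primes `q` with `(D/q) = -1`;
equivalently, the positive integers `n` such that every prime `p ∣ n` has
`(D/p) = 1`, or `(D/p) = -1` and `p` occurs in `n` to an even exponent. -/
def SD (D : ℤ) : Set ℕ :=
  {n : ℕ | 0 < n ∧ ∀ p : ℕ, p.Prime → p ∣ n →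
    (kron D p = 1 ∨ (kron D p = -1 ∧ Even (n.factorization p)))}

/-- `χ` is the completely multiplicative function `χ_D` with `χ_D(p) = (D/p)` on
primes. -/
def IsChiD (D : ℤ) (χ : ℕ → ℤ) : Prop :=
  χ 0 = 0 ∧ χ 1 = 1 ∧ (∀ m n : ℕ, χ (m * n) = χ m * χ n) ∧
    ∀ p : ℕ, p.Prime → χ p = kron D p

/-- `L(s,χ) = ∑_{n ≥ 1} χ(n) n^{-s}` (for real `s > 1`). -/
noncomputable def LChi (χ : ℕ → ℤ) (s : ℝ) : ℝ :=
  ∑' n : ℕ, (χ n : ℝ) * (n : ℝ) ^ (-s)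

/-- `L'(s,χ) = -∑_{n ≥ 1} χ(n) (log n) n^{-s}` (for real `s > 1`). -/
noncomputable def LChi' (χ : ℕ → ℤ) (s : ℝ) : ℝ :=
  -∑' n : ℕ, (χ n : ℝ) * Real.log n * (n : ℝ) ^ (-s)

/-- The Riemann zeta function `ζ(s) = ∑_{n ≥ 1} n^{-s}` (for real `s > 1`). -/
noncomputable def zetaR (s : ℝ) : ℝ := ∑' n : ℕ, (n : ℝ) ^ (-s)

/-- `ζ'(s) = -∑_{n ≥ 1} (log n) n^{-s}` (for real `s > 1`). -/
noncomputable def zetaR' (s : ℝ) : ℝ := -∑' n : ℕ, Real.log n * (n : ℝ) ^ (-s)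

/-! ### Auxiliary lemmas -/

lemma kron_trichotomy (D : ℤ) (p : ℕ) : kron D p = 0 ∨ kron D p = 1 ∨ kron D p = -1 := by
  unfold kron
  split_ifs with h1 h2 h3
  · exact Or.inl rfl
  · exact Or.inr (Or.inl rfl)
  · exact Or.inr (Or.inr rfl)
  · exact jacobiSym.trichotomy D p

lemma kron_ne_zero (D : ℤ) (p : ℕ) (hp : p.Prime) (hd : ¬ (p : ℤ) ∣ D) : kron D p ≠ 0 := by
  unfold kron
  rw [if_neg hd]
  split_ifs with h2 h3
  · exact one_ne_zero
  · exact neg_ne_zero.mpr one_ne_zero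
  · apply jacobiSym.ne_zero
    have h1 : (Int.gcd D p : ℤ) ∣ (p : ℤ) := Int.gcd_dvd_right D p
    have h2 : Int.gcd D p ∣ p := Int.natCast_dvd_natCast.mp h1
    rcases hp.eq_one_or_self_of_dvd _ h2 with h | h
    · exact h
    · exact absurd (h ▸ Int.gcd_dvd_left D p : (p:ℤ) ∣ D) hd

lemma kron_zero_iff (D : ℤ) (p : ℕ) (hp : p.Prime) : kron D p = 0 ↔ (p : ℤ) ∣ D := by
  constructor
  · intro h
    by_contra hd
    exact kron_ne_zero D p hp hd h
  · intro h; unfold kron; rw [if_pos h]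

/-- A generic "multiplicative" set of naturals determined by a condition on
prime factorizations. -/
def SDP (P : ℕ → ℕ → Prop) : Set ℕ :=
  {n : ℕ | 0 < n ∧ ∀ p : ℕ, p.Prime → p ∣ n → P p (n.factorization p)}

lemma one_mem_SDP (P : ℕ → ℕ → Prop) : 1 ∈ SDP P :=
  ⟨one_pos, fun _ pp hp => absurd (Nat.dvd_one.mp hp) pp.ne_one⟩

lemma mem_SDP_mul (P : ℕ → ℕ → Prop) {m n : ℕ} (h : Nat.Coprime m n) :
    m * n ∈ SDP P ↔ (m ∈ SDP P ∧ n ∈ SDP P) := by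
  rcases Nat.eq_zero_or_pos m with hm | hm
  · subst hm; simp [SDP]
  rcases Nat.eq_zero_or_pos n with hn | hn
  · subst hn; simp [SDP]
  have hm' : m ≠ 0 := hm.ne'
  have hn' : n ≠ 0 := hn.ne'
  have key : ∀ p : ℕ, p.Prime → p ∣ m → (m * n).factorization p = m.factorization p := by
    intro p pp hpm
    have hpn : ¬ p ∣ n := fun hpn => pp.one_lt.ne' (Nat.eq_one_of_dvd_coprimes h hpm hpn)
    rw [Nat.factorization_mul hm' hn', Finsupp.add_apply,
      Nat.factorization_eq_zero_of_not_dvd hpn, add_zero]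
  have key' : ∀ p : ℕ, p.Prime → p ∣ n → (m * n).factorization p = n.factorization p := by
    intro p pp hpn
    have hpm : ¬ p ∣ m := fun hpm => pp.one_lt.ne' (Nat.eq_one_of_dvd_coprimes h hpm hpn)
    rw [Nat.factorization_mul hm' hn', Finsupp.add_apply,
      Nat.factorization_eq_zero_of_not_dvd hpm, zero_add]
  constructor
  · rintro ⟨-, hall⟩
    refine ⟨⟨hm, fun p pp hpm => ?_⟩, ⟨hn, fun p pp hpn => ?_⟩⟩
    · have := hall p pp (hpm.mul_right n); rwa [key p pp hpm] at this
    · have := hall p pp (hpn.mul_left m); rwa [key' p pp hpn] at this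
  · rintro ⟨⟨-, h1⟩, ⟨-, h2⟩⟩
    refine ⟨Nat.mul_pos hm hn, fun p pp hpd => ?_⟩
    rcases (Nat.Prime.dvd_mul pp).mp hpd with hpm | hpn
    · rw [key p pp hpm]; exact h1 p pp hpm
    · rw [key' p pp hpn]; exact h2 p pp hpn

lemma mem_SDP_pow (P : ℕ → ℕ → Prop) {p e : ℕ} (pp : p.Prime) (he : e ≠ 0) :
    p ^ e ∈ SDP P ↔ P p e := by
  have hfact : (p ^ e).factorization p = e := by
    rw [pp.factorization_pow, Finsupp.single_eq_same]
  constructor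
  · rintro ⟨-, h⟩
    have := h p pp (dvd_pow_self p he)
    rwa [hfact] at this
  · intro hP
    refine ⟨pow_pos pp.pos e, fun q qq hq => ?_⟩
    have hqp : q = p := (Nat.prime_dvd_prime_iff_eq qq pp).mp (qq.dvd_of_dvd_pow hq)
    subst hqp; rwa [hfact]

lemma mem_SDP_pow_iff (P : ℕ → ℕ → Prop) {p : ℕ} (pp : p.Prime) (e : ℕ) :
    p ^ e ∈ SDP P ↔ (e = 0 ∨ P p e) := by
  rcases Nat.eq_zero_or_pos e with he | he
  · subst he; simp [one_mem_SDP P]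
  · rw [mem_SDP_pow P pp he.ne']
    simp [he.ne']

/-- The Dirichlet series coefficients of the set `SDP P`. -/
noncomputable def fSDP (P : ℕ → ℕ → Prop) (s : ℝ) (n : ℕ) : ℝ :=
  if n ∈ SDP P then (n : ℝ) ^ (-s) else 0

lemma fSDP_nonneg (P : ℕ → ℕ → Prop) (s : ℝ) (n : ℕ) : 0 ≤ fSDP P s n := by
  unfold fSDP; split_ifs
  · exact Real.rpow_nonneg (Nat.cast_nonneg n) _
  · exact le_refl 0

lemma fSDP_summable (P : ℕ → ℕ → Prop) {s : ℝ} (hs : 1 < s) :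
    Summable (fun n => ‖fSDP P s n‖) := by
  refine Summable.of_nonneg_of_le (fun n => norm_nonneg _) (fun n => ?_)
    (Real.summable_nat_rpow.mpr (by linarith : -s < -1))
  rw [Real.norm_eq_abs, abs_of_nonneg (fSDP_nonneg P s n)]
  unfold fSDP; split_ifs
  · exact le_refl _
  · exact Real.rpow_nonneg (Nat.cast_nonneg n) _

lemma fSDP_hasProd (P : ℕ → ℕ → Prop) {s : ℝ} (hs : 1 < s) :
    HasProd (fun p : Nat.Primes => ∑' e : ℕ, fSDP P s ((p : ℕ) ^ e))
      (∑' n : ℕ, fSDP P s n) := by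
  refine EulerProduct.eulerProduct_hasProd ?_ (fun {m n} h => ?_) (fSDP_summable P hs) ?_
  · unfold fSDP
    rw [if_pos (one_mem_SDP P)]
    simp
  · unfold fSDP
    by_cases hm : m ∈ SDP P <;> by_cases hn : n ∈ SDP P <;>
      simp only [mem_SDP_mul P h, hm, hn, if_pos, if_neg, and_true, and_false, false_and,
        not_false_iff, if_true, true_and, mul_zero, zero_mul, if_false]
    push_cast
    exact Real.mul_rpow (Nat.cast_nonneg m) (Nat.cast_nonneg n)
  · unfold fSDP
    rw [if_neg (fun h => lt_irrefl 0 h.1)]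

section local_sums

variable (P : ℕ → ℕ → Prop) {s : ℝ} (hs : 1 < s) {p : ℕ} (pp : p.Prime)

lemma cast_pow_rpow (e : ℕ) : ((p ^ e : ℕ) : ℝ) ^ (-s) = ((p : ℝ) ^ (-s)) ^ e := by
  have hp0 : (0:ℝ) ≤ (p : ℝ) := Nat.cast_nonneg p
  rw [Nat.cast_pow, ← Real.rpow_natCast (p : ℝ) e, ← Real.rpow_mul hp0, mul_comm,
    Real.rpow_mul hp0, Real.rpow_natCast]

include hs pp

lemma a_lt_one : (p : ℝ) ^ (-s) < 1 :=
  Real.rpow_lt_one_of_one_lt_of_neg (by exact_mod_cast pp.one_lt) (by linarith)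

lemma local_sum_one (hP : ∀ e : ℕ, e ≠ 0 → P p e) :
    ∑' e : ℕ, fSDP P s (p ^ e) = (1 - (p : ℝ) ^ (-s))⁻¹ := by
  have h1 : ∀ e : ℕ, fSDP P s (p ^ e) = ((p : ℝ) ^ (-s)) ^ e := by
    intro e
    unfold fSDP
    rw [if_pos, cast_pow_rpow]
    rw [mem_SDP_pow_iff P pp]
    rcases Nat.eq_zero_or_pos e with he | he
    · exact Or.inl he
    · exact Or.inr (hP e he.ne')
  rw [tsum_congr h1,
    tsum_geometric_of_lt_one (Real.rpow_nonneg (Nat.cast_nonneg p) _) (a_lt_one hs pp)]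

lemma local_sum_even (hP : ∀ e : ℕ, e ≠ 0 → (P p e ↔ Even e)) :
    ∑' e : ℕ, fSDP P s (p ^ e) = (1 - ((p : ℝ) ^ (-s)) ^ 2)⁻¹ := by
  set a : ℝ := (p : ℝ) ^ (-s) with ha
  have ha0 : 0 ≤ a := Real.rpow_nonneg (Nat.cast_nonneg p) _
  have ha1 : a < 1 := a_lt_one hs pp
  have h1 : ∀ e : ℕ, fSDP P s (p ^ e) = if Even e then a ^ e else 0 := by
    intro e
    unfold fSDP
    rw [cast_pow_rpow, mem_SDP_pow_iff P pp]
    rcases Nat.eq_zero_or_pos e with he | he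
    · subst he; simp
    · rw [hP e he.ne']
      by_cases h : Even e <;> simp [h, he.ne', ha]
  rw [tsum_congr h1]
  have hinj : Function.Injective (fun k : ℕ => 2 * k) :=
    fun a b h => by simpa using h
  have hsupp : Function.support (fun e : ℕ => if Even e then a ^ e else 0) ⊆
      Set.range (fun k : ℕ => 2 * k) := by
    intro e he
    by_cases h : Even e
    · obtain ⟨k, hk⟩ := h
      exact ⟨k, by simp only []; omega⟩
    · simp [h] at he
  rw [← Function.Injective.tsum_eq hinj hsupp]
  have h2 : ∀ k : ℕ, (if Even (2 * k) then a ^ (2 * k) else 0) = (a ^ 2) ^ k := by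
    intro k
    rw [if_pos (even_two_mul k), ← pow_mul]
  rw [tsum_congr h2,
    tsum_geometric_of_lt_one (by positivity) (by nlinarith)]

omit hs in
lemma local_sum_zero (hP : ∀ e : ℕ, e ≠ 0 → ¬ P p e) :
    ∑' e : ℕ, fSDP P s (p ^ e) = 1 := by
  have h1 : ∀ e : ℕ, fSDP P s (p ^ e) = if e = 0 then 1 else 0 := by
    intro e
    unfold fSDP
    rcases Nat.eq_zero_or_pos e with he | he
    · subst he; simp [one_mem_SDP P]
    · rw [if_neg, if_neg he.ne']
      rw [mem_SDP_pow_iff P pp]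
      push_neg
      exact ⟨he.ne', hP e he.ne'⟩
  rw [tsum_congr h1]
  exact tsum_ite_eq (0 : ℕ) (fun _ => (1 : ℝ))

end local_sums

/-! ### Euler products for ζ and L(s,χ) -/

noncomputable def zfn (s : ℝ) (hs : 1 < s) : ℕ →*₀ ℝ :=
  { toFun := fun n => (n : ℝ) ^ (-s)
    map_zero' := by
      show ((0:ℕ) : ℝ) ^ (-s) = 0
      rw [Nat.cast_zero, Real.zero_rpow (by linarith)]
    map_one' := by
      show ((1:ℕ) : ℝ) ^ (-s) = 1
      simp
    map_mul' := fun m n => by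
      show ((m * n : ℕ) : ℝ) ^ (-s) = ((m:ℕ):ℝ) ^ (-s) * ((n:ℕ):ℝ) ^ (-s)
      push_cast
      exact Real.mul_rpow (Nat.cast_nonneg m) (Nat.cast_nonneg n) }

lemma zfn_apply (s : ℝ) (hs : 1 < s) (n : ℕ) : zfn s hs n = (n : ℝ) ^ (-s) := rfl

lemma zeta_hasProd {s : ℝ} (hs : 1 < s) :
    HasProd (fun p : Nat.Primes => (1 - zfn s hs (p : ℕ))⁻¹) (∑' n : ℕ, zfn s hs n) := by
  have hsum : Summable (fun n => ‖zfn s hs n‖) := by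
    refine Summable.congr (Real.summable_nat_rpow.mpr (by linarith : -s < -1)) (fun n => ?_)
    rw [zfn_apply, Real.norm_eq_abs, abs_of_nonneg (Real.rpow_nonneg (Nat.cast_nonneg n) _)]
  exact EulerProduct.eulerProduct_completely_multiplicative_hasProd hsum

lemma zeta_hasProd' {s : ℝ} (hs : 1 < s) :
    HasProd (fun p : Nat.Primes => (1 - ((p : ℕ) : ℝ) ^ (-s))⁻¹) (∑' n : ℕ, (n : ℝ) ^ (-s)) := by
  simpa only [zfn_apply] using zeta_hasProd hs

noncomputable def cfn {s : ℝ} (hs : 1 < s) (χ : ℕ → ℤ) (hχ0 : χ 0 = 0) (hχ1 : χ 1 = 1)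
    (hχmul : ∀ m n : ℕ, χ (m * n) = χ m * χ n) : ℕ →*₀ ℝ :=
  { toFun := fun n => (χ n : ℝ) * (n : ℝ) ^ (-s)
    map_zero' := by
      show (χ 0 : ℝ) * ((0:ℕ) : ℝ) ^ (-s) = 0
      rw [hχ0]; simp
    map_one' := by
      show (χ 1 : ℝ) * ((1:ℕ) : ℝ) ^ (-s) = 1
      rw [hχ1]; simp
    map_mul' := fun m n => by
      show (χ (m*n) : ℝ) * ((m*n : ℕ) : ℝ) ^ (-s) =
        ((χ m : ℝ) * ((m:ℕ):ℝ) ^ (-s)) * ((χ n : ℝ) * ((n:ℕ):ℝ) ^ (-s))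
      rw [hχmul m n]
      push_cast
      rw [Real.mul_rpow (Nat.cast_nonneg m) (Nat.cast_nonneg n)]
      ring }

lemma cfn_apply {s : ℝ} (hs : 1 < s) (χ : ℕ → ℤ) (hχ0 : χ 0 = 0) (hχ1 : χ 1 = 1)
    (hχmul : ∀ m n : ℕ, χ (m * n) = χ m * χ n) (n : ℕ) :
    cfn hs χ hχ0 hχ1 hχmul n = (χ n : ℝ) * (n : ℝ) ^ (-s) := rfl

lemma chi_hasProd {s : ℝ} (hs : 1 < s) (χ : ℕ → ℤ) (hχ0 : χ 0 = 0) (hχ1 : χ 1 = 1)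
    (hχmul : ∀ m n : ℕ, χ (m * n) = χ m * χ n) (hb : ∀ n, |(χ n : ℝ)| ≤ 1) :
    HasProd (fun p : Nat.Primes => (1 - cfn hs χ hχ0 hχ1 hχmul (p : ℕ))⁻¹)
      (∑' n : ℕ, cfn hs χ hχ0 hχ1 hχmul n) := by
  have hsum : Summable (fun n => ‖cfn hs χ hχ0 hχ1 hχmul n‖) := by
    refine Summable.of_nonneg_of_le (fun n => norm_nonneg _) (fun n => ?_)
      (Real.summable_nat_rpow.mpr (by linarith : -s < -1))
    have h0 : (0:ℝ) ≤ (n : ℝ) ^ (-s) := Real.rpow_nonneg (Nat.cast_nonneg n) _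
    calc ‖cfn hs χ hχ0 hχ1 hχmul n‖ = |(χ n : ℝ)| * ((n : ℝ) ^ (-s)) := by
          rw [cfn_apply, Real.norm_eq_abs, abs_mul, abs_of_nonneg h0]
      _ ≤ 1 * ((n : ℝ) ^ (-s)) := mul_le_mul_of_nonneg_right (hb n) h0
      _ = (n : ℝ) ^ (-s) := one_mul _
  exact EulerProduct.eulerProduct_completely_multiplicative_hasProd hsum

lemma chi_hasProd' {s : ℝ} (hs : 1 < s) (χ : ℕ → ℤ) (hχ0 : χ 0 = 0) (hχ1 : χ 1 = 1)
    (hχmul : ∀ m n : ℕ, χ (m * n) = χ m * χ n) (hb : ∀ n, |(χ n : ℝ)| ≤ 1) :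
    HasProd (fun p : Nat.Primes => (1 - (χ (p : ℕ) : ℝ) * ((p : ℕ) : ℝ) ^ (-s))⁻¹)
      (∑' n : ℕ, (χ n : ℝ) * (n : ℝ) ^ (-s)) := by
  simpa only [cfn_apply] using chi_hasProd hs χ hχ0 hχ1 hχmul hb

lemma chi_abs_le (χ : ℕ → ℤ) (hχ0 : χ 0 = 0) (hχ1 : χ 1 = 1)
    (hχmul : ∀ m n : ℕ, χ (m * n) = χ m * χ n)
    (hp : ∀ p : ℕ, p.Prime → χ p = 0 ∨ χ p = 1 ∨ χ p = -1) (n : ℕ) : |(χ n : ℝ)| ≤ 1 := by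
  induction n using Nat.recOnMul with
  | zero => rw [hχ0]; norm_num
  | one => rw [hχ1]; norm_num
  | prime p pp => rcases hp p pp with h | h | h <;> rw [h] <;> norm_num
  | mul m n hm hn =>
      rw [hχmul m n]
      push_cast
      rw [abs_mul]
      calc |(χ m : ℝ)| * |(χ n : ℝ)| ≤ 1 * 1 :=
            mul_le_mul hm hn (abs_nonneg _) zero_le_one
        _ = 1 := one_mul 1

/-! ### The two multiplicative sets occurring in the proof -/

def Pone (D : ℤ) : ℕ → ℕ → Prop := fun p e => kron D p = 1 ∨ (kron D p = -1 ∧ Even e)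

def Ptwo (D : ℤ) : ℕ → ℕ → Prop := fun p e => kron D p = -1 ∧ Even e

lemma SD_eq_SDP (D : ℤ) : SD D = SDP (Pone D) := rfl

noncomputable def Ffac (D : ℤ) (s : ℝ) (p : ℕ) : ℝ :=
  if kron D p = 1 then (1 - (p:ℝ) ^ (-s))⁻¹
  else if kron D p = -1 then (1 - ((p:ℝ) ^ (-s)) ^ 2)⁻¹ else 1

noncomputable def Mfac (D : ℤ) (s : ℝ) (p : ℕ) : ℝ :=
  if kron D p = -1 then (1 - ((p:ℝ) ^ (-s)) ^ 2)⁻¹ else 1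

noncomputable def Dfac (D : ℤ) (s : ℝ) (p : ℕ) : ℝ :=
  if (p:ℤ) ∣ D then (1 - (p:ℝ) ^ (-s)) else 1

lemma F_hasProd (D : ℤ) {s : ℝ} (hs : 1 < s) :
    HasProd (fun p : Nat.Primes => Ffac D s (p : ℕ)) (∑' n : ℕ, fSDP (Pone D) s n) := by
  have h := fSDP_hasProd (Pone D) hs
  have he : (fun p : Nat.Primes => ∑' e : ℕ, fSDP (Pone D) s ((p : ℕ) ^ e)) =
      fun p : Nat.Primes => Ffac D s (p : ℕ) := by
    funext p
    have pp : Nat.Prime (p : ℕ) := p.prop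
    unfold Ffac
    rcases kron_trichotomy D (p : ℕ) with h0 | h1 | hm
    · rw [if_neg (by rw [h0]; norm_num), if_neg (by rw [h0]; norm_num)]
      refine local_sum_zero (Pone D) pp (fun e he => ?_)
      rintro (h' | ⟨h', -⟩) <;> rw [h0] at h' <;> norm_num at h'
    · rw [if_pos h1]
      exact local_sum_one (Pone D) hs pp (fun e he => Or.inl h1)
    · rw [if_neg (by rw [hm]; norm_num), if_pos hm]
      refine local_sum_even (Pone D) hs pp (fun e he => ?_)
      constructor
      · rintro (h' | ⟨-, h'⟩)
        · rw [hm] at h'; norm_num at h'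
        · exact h'
      · intro h'; exact Or.inr ⟨hm, h'⟩
  rw [← he]
  exact h

lemma M_hasProd (D : ℤ) {s : ℝ} (hs : 1 < s) :
    HasProd (fun p : Nat.Primes => Mfac D s (p : ℕ)) (∑' n : ℕ, fSDP (Ptwo D) s n) := by
  have h := fSDP_hasProd (Ptwo D) hs
  have he : (fun p : Nat.Primes => ∑' e : ℕ, fSDP (Ptwo D) s ((p : ℕ) ^ e)) =
      fun p : Nat.Primes => Mfac D s (p : ℕ) := by
    funext p
    have pp : Nat.Prime (p : ℕ) := p.prop
    unfold Mfac
    by_cases hm : kron D (p : ℕ) = -1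
    · rw [if_pos hm]
      refine local_sum_even (Ptwo D) hs pp (fun e he => ?_)
      exact ⟨fun h' => h'.2, fun h' => ⟨hm, h'⟩⟩
    · rw [if_neg hm]
      exact local_sum_zero (Ptwo D) pp (fun e he h' => hm h'.1)
  rw [← he]
  exact h

lemma rpow_neg_two_mul {x : ℝ} (hx : 0 ≤ x) (s : ℝ) : x ^ (-(2 * s)) = (x ^ (-s)) ^ 2 := by
  rw [show -(2 * s) = (-s) * ((2:ℕ) : ℝ) by push_cast; ring, Real.rpow_mul hx,
    Real.rpow_natCast]

/-- For a fundamental discriminant `D ≤ -3` and real `s > 1`: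
`L_{S_D}(s)² = ζ(s) L(s,χ_D) ∏_{(D/p) = -1} (1 - p^{-2s})^{-1} ∏_{p ∣ D} (1 - p^{-s})`. -/
theorem LSeries_SD_sq (D : ℤ) (hD : D ≤ -3) (hfund : IsFundamentalDiscriminant D)
    (χD : ℕ → ℤ) (hχ : IsChiD D χD) (s : ℝ) (hs : 1 < s) :
    (∑' n : ℕ, if n ∈ SD D then (n : ℝ) ^ (-s) else 0) ^ 2 =
      zetaR s * LChi χD s *
        (∏' p : {p : ℕ // p.Prime ∧ kron D p = -1}, (1 - (p : ℝ) ^ (-(2 * s)))⁻¹) *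
        ∏ p ∈ D.natAbs.primeFactors, (1 - (p : ℝ) ^ (-s)) := by
  obtain ⟨hχ0, hχ1, hχmul, hχp⟩ := hχ
  have hD0 : D ≠ 0 := by intro h; rw [h] at hD; norm_num at hD
  have hDn0 : D.natAbs ≠ 0 := Int.natAbs_ne_zero.mpr hD0
  have hb : ∀ n, |(χD n : ℝ)| ≤ 1 :=
    chi_abs_le χD hχ0 hχ1 hχmul (fun p pp => by rw [hχp p pp]; exact kron_trichotomy D p)
  have hZ := zeta_hasProd' hs
  have hL := chi_hasProd' hs χD hχ0 hχ1 hχmul hb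
  have hF := F_hasProd D hs
  have hM := M_hasProd D hs
  -- the finite Euler factor over p ∣ D
  have hDmult : Multipliable (fun p : Nat.Primes => Dfac D s (p : ℕ)) := by
    apply multipliable_of_finite_mulSupport
    have hsub : Function.mulSupport (fun p : Nat.Primes => Dfac D s (p : ℕ)) ⊆
        (Subtype.val) ⁻¹' (D.natAbs.primeFactors : Set ℕ) := by
      intro p hp
      have hdvd : ((p : ℕ) : ℤ) ∣ D := by
        by_contra h
        exact hp (show Dfac D s (p : ℕ) = 1 by unfold Dfac; rw [if_neg h])
      have : (p : ℕ) ∣ D.natAbs := by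
        rwa [← Int.natCast_dvd_natCast, Int.dvd_natAbs]
      exact Nat.mem_primeFactors.mpr ⟨p.prop, this, hDn0⟩
    exact Set.Finite.subset
      ((D.natAbs.primeFactors.finite_toSet).preimage (Subtype.val_injective.injOn)) hsub
  -- rewrite the M-product over the subtype as a product over all primes
  have hMprod : (∏' p : {p : ℕ // p.Prime ∧ kron D p = -1}, (1 - (p : ℝ) ^ (-(2 * s)))⁻¹) =
      ∏' p : Nat.Primes, Mfac D s (p : ℕ) := by
    set g : {p : ℕ // p.Prime ∧ kron D p = -1} → Nat.Primes := fun p => ⟨p.1, p.2.1⟩ with hg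
    have hginj : Function.Injective g := by
      intro x y h
      have hval : ((g x : Nat.Primes) : ℕ) = ((g y : Nat.Primes) : ℕ) :=
        congrArg (fun q : Nat.Primes => (q : ℕ)) h
      exact Subtype.ext hval
    have hsupp : Function.mulSupport (fun p : Nat.Primes => Mfac D s (p : ℕ)) ⊆
        Set.range g := by
      intro p hp
      have hm : kron D (p : ℕ) = -1 := by
        by_contra h
        exact hp (show Mfac D s (p : ℕ) = 1 by unfold Mfac; rw [if_neg h])
      exact ⟨⟨(p : ℕ), p.prop, hm⟩, Subtype.ext rfl⟩
    rw [← Function.Injective.tprod_eq hginj hsupp]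
    refine tprod_congr (fun c => ?_)
    show (1 - ((c : ℕ) : ℝ) ^ (-(2 * s)))⁻¹ = Mfac D s ((g c : Nat.Primes) : ℕ)
    unfold Mfac
    rw [show ((g c : Nat.Primes) : ℕ) = (c : ℕ) from rfl, if_pos c.2.2,
      rpow_neg_two_mul (Nat.cast_nonneg _) s]
  -- rewrite the finite product over p ∣ D as a product over all primes
  have hDprod : (∏ p ∈ D.natAbs.primeFactors, (1 - (p : ℝ) ^ (-s))) =
      ∏' p : Nat.Primes, Dfac D s (p : ℕ) := by
    set g : {q : ℕ // q ∈ D.natAbs.primeFactors} → Nat.Primes :=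
      fun q => ⟨q.1, Nat.prime_of_mem_primeFactors q.2⟩ with hg
    have hginj : Function.Injective g := by
      intro x y h
      have hval : ((g x : Nat.Primes) : ℕ) = ((g y : Nat.Primes) : ℕ) :=
        congrArg (fun q : Nat.Primes => (q : ℕ)) h
      exact Subtype.ext hval
    have hsupp : Function.mulSupport (fun p : Nat.Primes => Dfac D s (p : ℕ)) ⊆
        Set.range g := by
      intro p hp
      have hdvd : ((p : ℕ) : ℤ) ∣ D := by
        by_contra h
        exact hp (show Dfac D s (p : ℕ) = 1 by unfold Dfac; rw [if_neg h])
      have hmem : (p : ℕ) ∈ D.natAbs.primeFactors := by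
        refine Nat.mem_primeFactors.mpr ⟨p.prop, ?_, hDn0⟩
        rwa [← Int.natCast_dvd_natCast, Int.dvd_natAbs]
      exact ⟨⟨(p : ℕ), hmem⟩, Subtype.ext rfl⟩
    rw [← Function.Injective.tprod_eq hginj hsupp]
    have hcongr : ∀ q : {q : ℕ // q ∈ D.natAbs.primeFactors},
        Dfac D s ((g q : Nat.Primes) : ℕ) = 1 - ((q : ℕ) : ℝ) ^ (-s) := by
      intro q
      unfold Dfac
      rw [show ((g q : Nat.Primes) : ℕ) = (q : ℕ) from rfl, if_pos]
      exact Int.dvd_natAbs.mp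
        (Int.natCast_dvd_natCast.mpr (Nat.dvd_of_mem_primeFactors q.2))
    rw [tprod_congr hcongr, Finset.tprod_subtype D.natAbs.primeFactors
      (fun q => 1 - (q : ℝ) ^ (-s))]
  -- pointwise identity of Euler factors
  have hpoint : ∀ p : Nat.Primes,
      Ffac D s (p : ℕ) * Ffac D s (p : ℕ) =
        (1 - ((p : ℕ) : ℝ) ^ (-s))⁻¹ * (1 - (χD (p : ℕ) : ℝ) * ((p : ℕ) : ℝ) ^ (-s))⁻¹ *
          Mfac D s (p : ℕ) * Dfac D s (p : ℕ) := by
    intro p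
    have pp : Nat.Prime (p : ℕ) := p.prop
    have ha0 : (0:ℝ) ≤ ((p : ℕ) : ℝ) ^ (-s) := Real.rpow_nonneg (Nat.cast_nonneg _) _
    have ha1 : ((p : ℕ) : ℝ) ^ (-s) < 1 := a_lt_one hs pp
    unfold Ffac Mfac Dfac
    set a : ℝ := ((p : ℕ) : ℝ) ^ (-s) with ha
    have h1a : (1:ℝ) - a ≠ 0 := by
      intro h
      rw [sub_eq_zero] at h
      exact (ne_of_lt ha1) h.symm
    rcases kron_trichotomy D (p : ℕ) with h0 | h1 | hm
    · have hdvd : ((p : ℕ) : ℤ) ∣ D := (kron_zero_iff D (p : ℕ) pp).mp h0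
      have hχ' : (χD (p : ℕ) : ℝ) = 0 := by rw [hχp _ pp, h0]; norm_num
      rw [h0, if_pos hdvd, hχ', if_neg (by norm_num : ¬ (0:ℤ) = 1),
        if_neg (by norm_num : ¬ (0:ℤ) = -1), zero_mul, sub_zero, inv_one]
      field_simp
    · have hndvd : ¬ ((p : ℕ) : ℤ) ∣ D := fun h =>
        absurd ((kron_zero_iff D (p : ℕ) pp).mpr h) (by rw [h1]; norm_num)
      have hχ' : (χD (p : ℕ) : ℝ) = 1 := by rw [hχp _ pp, h1]; norm_num
      rw [h1, if_pos rfl, if_neg (by norm_num : ¬ (1:ℤ) = -1), if_neg hndvd, hχ']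
      field_simp
    · have hndvd : ¬ ((p : ℕ) : ℤ) ∣ D := fun h =>
        absurd ((kron_zero_iff D (p : ℕ) pp).mpr h) (by rw [hm]; norm_num)
      have hχ' : (χD (p : ℕ) : ℝ) = -1 := by rw [hχp _ pp, hm]; norm_num
      rw [hm, if_neg (by norm_num : ¬ (-1:ℤ) = 1), if_pos rfl, if_neg hndvd, hχ', mul_one]
      have hfac : ((1:ℝ) - a)⁻¹ * (1 - (-1) * a)⁻¹ = (1 - a ^ 2)⁻¹ := by
        rw [← mul_inv]; congr 1; ring
      rw [hfac]
  -- assemble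
  rw [show (∑' n : ℕ, if n ∈ SD D then (n : ℝ) ^ (-s) else 0) =
    ∑' n : ℕ, fSDP (Pone D) s n from rfl]
  rw [← hF.tprod_eq, hMprod, hDprod]
  rw [show zetaR s = ∑' n : ℕ, (n : ℝ) ^ (-s) from rfl,
    show LChi χD s = ∑' n : ℕ, (χD n : ℝ) * (n : ℝ) ^ (-s) from rfl]
  rw [← hZ.tprod_eq, ← hL.tprod_eq]
  rw [sq, ← Multipliable.tprod_mul hF.multipliable hF.multipliable,
    ← Multipliable.tprod_mul hZ.multipliable hL.multipliable,
    ← Multipliable.tprod_mul (hZ.multipliable.mul hL.multipliable) hM.multipliable,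
    ← Multipliable.tprod_mul ((hZ.multipliable.mul hL.multipliable).mul hM.multipliable) hDmult]
  exact tprod_congr hpoint
end
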